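/- arXiv:1801.03197 — 6 statements merged into one kernel-verified Lean document; each statement's English description precedes it below -/
import Mathlib

section
/- Let a ∈ (0,∞], and let u, v be nonnegative measurable functions on (0,a) with v > 0. If A₁ := sup_{0<t<a} (∫_t^a u(s) ds)(∫₀^t v(s)^{-1} ds) < ∞, then for every measurable f on (0,a): ∫₀^a |∫₀^s f(t) dt|² u(s) ds ≤ 4 A₁ ∫₀^a |f(s)|² v(s) ds. -/
open MeasureTheory Set
open scoped ENNReal

namespace MuckAux

lemma exists_nat_add_lt {x r : ℝ} (h : x < r) : ∃ n : ℕ, x + 1/(n+1) < r := by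
  obtain ⟨n, hn⟩ := exists_nat_gt (1/(r-x))
  have h1 : 0 < r - x := by linarith
  have h2 : 0 < 1/(r-x) := by positivity
  have h3 : (0:ℝ) < (n:ℝ) + 1 := by positivity
  have h4 : 1/(r-x) < (n:ℝ) + 1 := by linarith
  have h5 : 1/((n:ℝ)+1) < 1/(1/(r-x)) := one_div_lt_one_div_of_lt h2 h4
  rw [one_div_one_div] at h5
  exact ⟨n, by linarith⟩

lemma measure_tail_eq_iSup (μ : Measure ℝ) (P : Set ℝ) (t : ℝ) :
    μ {s | t < s ∧ s ∈ P} = ⨆ n : ℕ, μ {s | t + 1/(n+1) < s ∧ s ∈ P} := by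
  have hmono : Monotone (fun n : ℕ => {s : ℝ | t + 1/(n+1) < s ∧ s ∈ P}) := by
    intro n m hnm x hx
    refine ⟨lt_of_le_of_lt ?_ hx.1, hx.2⟩
    have : 1/((m:ℝ)+1) ≤ 1/((n:ℝ)+1) := by
      apply one_div_le_one_div_of_le (by positivity)
      exact_mod_cast by omega
    linarith [hx.1]
  rw [← Monotone.measure_iUnion hmono]
  congr 1
  ext x
  simp only [mem_iUnion, mem_setOf_eq]
  constructor
  · rintro ⟨hx, hP⟩
    obtain ⟨n, hn⟩ := exists_nat_add_lt hx
    exact ⟨n, hn, hP⟩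
  · rintro ⟨n, hn, hP⟩
    have : (0:ℝ) < 1/((n:ℝ)+1) := by positivity
    exact ⟨by linarith, hP⟩

lemma measure_Ioo_eq_iSup (μ : Measure ℝ) (r : ℝ) :
    μ (Ioo 0 r) = ⨆ n : ℕ, μ (Ioo 0 (r - 1/(n+1))) := by
  have hmono : Monotone (fun n : ℕ => Ioo (0:ℝ) (r - 1/(n+1))) := by
    intro n m hnm
    apply Ioo_subset_Ioo le_rfl
    have : 1/((m:ℝ)+1) ≤ 1/((n:ℝ)+1) := by
      apply one_div_le_one_div_of_le (by positivity)
      exact_mod_cast by omega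
    linarith
  rw [← Monotone.measure_iUnion hmono]
  congr 1
  ext x
  simp only [mem_iUnion, mem_Ioo]
  constructor
  · rintro ⟨hx, hxr⟩
    obtain ⟨n, hn⟩ := exists_nat_add_lt hxr
    exact ⟨n, hx, by linarith⟩
  · rintro ⟨n, hx, hxr⟩
    have : (0:ℝ) < 1/((n:ℝ)+1) := by positivity
    exact ⟨hx, by linarith⟩

lemma lint_const_Ioc (K : ℝ≥0∞) (c : ℝ) : ∫⁻ _ in Ioc 0 c, K = K * ENNReal.ofReal c := by
  rw [setLIntegral_const, Real.volume_Ioc, sub_zero]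

lemma lint_inv_sq_Ioi {c : ℝ} (hc : 0 < c) :
    ∫⁻ x in Ioi c, ENNReal.ofReal ((x^2)⁻¹) = ENNReal.ofReal c⁻¹ := by
  have hint : IntegrableOn (fun x : ℝ => x ^ (-2:ℝ)) (Ioi c) :=
    integrableOn_Ioi_rpow_of_lt (by norm_num) hc
  have heq : ∫⁻ x in Ioi c, ENNReal.ofReal ((x^2)⁻¹)
      = ∫⁻ x in Ioi c, ENNReal.ofReal (x ^ (-2:ℝ)) := by
    apply setLIntegral_congr_fun measurableSet_Ioi
    intro x hx
    beta_reduce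
    have hx0 : 0 < x := hc.trans hx
    rw [Real.rpow_neg hx0.le]
    norm_num [Real.rpow_natCast]
  rw [heq, ← ofReal_integral_eq_lintegral_ofReal hint]
  · rw [integral_Ioi_rpow_of_lt (by norm_num) hc]
    norm_num
    rw [Real.rpow_neg_one]
  · filter_upwards [ae_restrict_mem measurableSet_Ioi] with x hx
    exact Real.rpow_nonneg (hc.trans hx).le _

lemma sq_rpow_half (x : ℝ≥0∞) : (x ^ (1/2:ℝ)) ^ (2:ℕ) = x := by
  rw [← ENNReal.rpow_natCast (x ^ (1/2:ℝ)) 2, ← ENNReal.rpow_mul]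
  norm_num

lemma lintegral_sq_le_mul {α : Type*} [MeasurableSpace α] (μ : Measure α) (φ ψ : α → ℝ≥0∞)
    (hφ : AEMeasurable φ μ) (hψ : AEMeasurable ψ μ) :
    (∫⁻ x, φ x * ψ x ∂μ) ^ (2:ℕ) ≤ (∫⁻ x, φ x ^ (2:ℕ) ∂μ) * (∫⁻ x, ψ x ^ (2:ℕ) ∂μ) := by
  have hpq : Real.HolderConjugate 2 2 := by
    constructor <;> norm_num
  have h := ENNReal.lintegral_mul_le_Lp_mul_Lq μ hpq hφ hψ
  calc (∫⁻ x, φ x * ψ x ∂μ) ^ (2:ℕ)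
      ≤ ((∫⁻ x, φ x ^ (2:ℝ) ∂μ) ^ (1/2:ℝ) * (∫⁻ x, ψ x ^ (2:ℝ) ∂μ) ^ (1/2:ℝ)) ^ (2:ℕ) := by
        apply pow_le_pow_left' h
    _ = (∫⁻ x, φ x ^ (2:ℕ) ∂μ) * (∫⁻ x, ψ x ^ (2:ℕ) ∂μ) := by
        rw [mul_pow, sq_rpow_half, sq_rpow_half]
        congr 1 <;> · apply lintegral_congr; intro x; rw [← ENNReal.rpow_natCast]; norm_num


lemma layer_bound (m : ℝ → ℝ≥0∞) (C D : ℝ≥0∞) (hD : D ≠ ∞) {l0 : ℝ} (hl0 : 0 < l0)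
    (h1 : ∀ lam : ℝ, 0 < lam → lam ≤ l0 → m lam ≤ C)
    (h2 : ∀ lam : ℝ, l0 < lam → m lam ≤ D * ENNReal.ofReal ((lam^2)⁻¹)) :
    ∫⁻ lam in Ioi 0, m lam ≤ C * ENNReal.ofReal l0 + D * ENNReal.ofReal l0⁻¹ := by
  rw [← Ioc_union_Ioi_eq_Ioi hl0.le]
  refine le_trans (lintegral_union_le _ _ _) (add_le_add ?_ ?_)
  · refine le_trans (setLIntegral_mono' measurableSet_Ioc (fun x hx => h1 x hx.1 hx.2)) ?_
    rw [lint_const_Ioc]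
  · refine le_trans (setLIntegral_mono' measurableSet_Ioi (fun x hx => h2 x hx)) ?_
    rw [lintegral_const_mul' _ _ hD, lint_inv_sq_Ioi hl0]

lemma key1 (μ : Measure ℝ) (hμ0 : ∀ x : ℝ, μ {x} = 0) (s : ℝ)
    (hfin : μ (Ioo 0 s) ≠ ∞) (hpos : μ (Ioo 0 s) ≠ 0) :
    ∫⁻ t in Ioo 0 s, ENNReal.ofReal (Real.sqrt (((μ (Ioo 0 t)).toReal)⁻¹)) ∂μ
      ≤ 2 * ENNReal.ofReal (Real.sqrt ((μ (Ioo 0 s)).toReal)) := by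
  set w := (μ (Ioo 0 s)).toReal with hw
  have hw0 : 0 < w := ENNReal.toReal_pos hpos hfin
  have hWmono : Monotone (fun t : ℝ => μ (Ioo 0 t)) :=
    fun t₁ t₂ h => measure_mono (Ioo_subset_Ioo le_rfl h)
  have hWmeas : Measurable (fun t : ℝ => μ (Ioo 0 t)) := hWmono.measurable
  have hfmeas : Measurable (fun t : ℝ => Real.sqrt (((μ (Ioo 0 t)).toReal)⁻¹)) :=
    Real.continuous_sqrt.measurable.comp (hWmeas.ennreal_toReal.inv)
  rw [lintegral_eq_lintegral_meas_lt (μ.restrict (Ioo 0 s))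
    (Filter.Eventually.of_forall fun t => Real.sqrt_nonneg _) hfmeas.aemeasurable]
  have hl0 : 0 < Real.sqrt w⁻¹ := Real.sqrt_pos.2 (by positivity)
  refine le_trans (layer_bound _ (μ (Ioo 0 s)) 1 ENNReal.one_ne_top hl0 ?_ ?_) ?_
  · intro lam _ _
    calc (μ.restrict (Ioo 0 s)) {t | lam < Real.sqrt (((μ (Ioo 0 t)).toReal)⁻¹)}
        ≤ (μ.restrict (Ioo 0 s)) univ := measure_mono (subset_univ _)
      _ = μ (Ioo 0 s) := by rw [Measure.restrict_apply_univ]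
  · intro lam hlam
    have hlam0 : 0 < lam := hl0.trans hlam
    rw [Measure.restrict_apply (by exact measurableSet_lt measurable_const hfmeas)]
    set S := {t | lam < Real.sqrt (((μ (Ioo 0 t)).toReal)⁻¹)} ∩ Ioo 0 s with hS
    have hSbound : ∀ t' ∈ S, μ (Ioo 0 t') ≤ ENNReal.ofReal ((lam^2)⁻¹) := by
      intro t' ht'
      have h1 : lam ^ 2 < ((μ (Ioo 0 t')).toReal)⁻¹ :=
        (Real.lt_sqrt hlam0.le).1 ht'.1
      have h2 : (μ (Ioo 0 t')).toReal < (lam^2)⁻¹ := by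
        have := inv_strictAnti₀ (by positivity : (0:ℝ) < lam^2) h1
        rwa [inv_inv] at this
      have h3 : μ (Ioo 0 t') ≠ ∞ :=
        fun h => hfin (top_le_iff.1 (h ▸ hWmono ht'.2.2.le))
      calc μ (Ioo 0 t') = ENNReal.ofReal (μ (Ioo 0 t')).toReal := (ENNReal.ofReal_toReal h3).symm
        _ ≤ ENNReal.ofReal ((lam^2)⁻¹) := ENNReal.ofReal_le_ofReal h2.le
    rcases S.eq_empty_or_nonempty with hSe | hSne
    · simp [hSe]
    · have hbdd : BddAbove S := ⟨s, fun x hx => hx.2.2.le⟩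
      set r₀ := sSup S with hr₀
      have hr₀pos : 0 < r₀ := lt_of_lt_of_le hSne.choose_spec.2.1 (le_csSup hbdd hSne.choose_spec)
      have hsub : S ⊆ Ioo 0 r₀ ∪ {r₀} := by
        intro x hx
        rcases lt_or_eq_of_le (le_csSup hbdd hx) with h | h
        · exact Or.inl ⟨hx.2.1, h⟩
        · exact Or.inr (by simp [h, hr₀])
      rw [one_mul]
      calc μ S ≤ μ (Ioo 0 r₀ ∪ {r₀}) := measure_mono hsub
        _ ≤ μ (Ioo 0 r₀) + μ {r₀} := measure_union_le _ _
        _ = μ (Ioo 0 r₀) := by rw [hμ0, add_zero]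
        _ ≤ ENNReal.ofReal ((lam^2)⁻¹) := by
            rw [measure_Ioo_eq_iSup]
            refine iSup_le fun n => ?_
            obtain ⟨t', ht'S, ht'⟩ := exists_lt_of_lt_csSup hSne
              (by linarith [show (0:ℝ) < 1/((n:ℝ)+1) by positivity] : r₀ - 1/((n:ℝ)+1) < r₀)
            exact le_trans (hWmono (by linarith : r₀ - 1/((n:ℝ)+1) ≤ t')) (hSbound t' ht'S)
  · have h1 : μ (Ioo 0 s) * ENNReal.ofReal (Real.sqrt w⁻¹) = ENNReal.ofReal (Real.sqrt w) := by
      rw [show μ (Ioo 0 s) = ENNReal.ofReal w from (ENNReal.ofReal_toReal hfin).symm,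
        ← ENNReal.ofReal_mul hw0.le]
      congr 1
      rw [Real.sqrt_inv]
      have hsw : 0 < Real.sqrt w := Real.sqrt_pos.2 hw0
      field_simp
      exact (Real.sq_sqrt hw0.le).symm
    have h2 : (1:ℝ≥0∞) * ENNReal.ofReal (Real.sqrt w⁻¹)⁻¹ = ENNReal.ofReal (Real.sqrt w) := by
      rw [one_mul, Real.sqrt_inv, inv_inv]
    rw [h1, h2, two_mul]

lemma le_mul_inv_of_mul_le {A x B : ℝ≥0∞} (hB0 : B ≠ 0) (hBt : B ≠ ∞) (hxB : x * B ≤ A) :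
    x ≤ A * B⁻¹ := by
  calc x = x * B * B⁻¹ := by rw [mul_assoc, ENNReal.mul_inv_cancel hB0 hBt, mul_one]
    _ ≤ A * B⁻¹ := mul_le_mul_left hxB _

lemma key2 (ν : Measure ℝ) (hν0 : ∀ x : ℝ, ν {x} = 0)
    (W : ℝ → ℝ≥0∞) (hWmono : Monotone W) (hWmeas : Measurable W)
    (R E : Set ℝ) (hE : E ⊆ R) (hEmeas : MeasurableSet E)
    (A : ℝ≥0∞) (hAfin : A ≠ ∞)
    (hU : ∀ r ∈ E, ν {σ | r < σ ∧ σ ∈ R} * W r ≤ A)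
    (hEfin : ∀ r ∈ E, W r ≠ ∞)
    (t : ℝ) (hWt0 : W t ≠ 0) (hWtfin : W t ≠ ∞)
    (htU : ν {σ | t < σ ∧ σ ∈ R} * W t ≤ A) :
    ∫⁻ s in E ∩ Ioi t, ENNReal.ofReal (Real.sqrt ((W s).toReal)) ∂ν
      ≤ 2 * A * ENNReal.ofReal (Real.sqrt (((W t).toReal)⁻¹)) := by
  set w := (W t).toReal with hw
  have hw0 : 0 < w := ENNReal.toReal_pos hWt0 hWtfin
  have hfmeas : Measurable (fun σ : ℝ => Real.sqrt ((W σ).toReal)) :=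
    Real.continuous_sqrt.measurable.comp hWmeas.ennreal_toReal
  rw [lintegral_eq_lintegral_meas_lt (ν.restrict (E ∩ Ioi t))
    (Filter.Eventually.of_forall fun σ => Real.sqrt_nonneg _) hfmeas.aemeasurable]
  have hl0 : 0 < Real.sqrt w := Real.sqrt_pos.2 hw0
  have hmeasσ : ∀ lam : ℝ, MeasurableSet {σ : ℝ | lam < Real.sqrt ((W σ).toReal)} :=
    fun lam => measurableSet_lt measurable_const hfmeas
  refine le_trans (layer_bound _ (A * (W t)⁻¹) A hAfin hl0 ?_ ?_) ?_
  · intro lam _ _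
    rw [Measure.restrict_apply (hmeasσ lam)]
    refine le_trans (measure_mono ?_) (le_mul_inv_of_mul_le hWt0 hWtfin htU)
    exact fun σ hσ => ⟨hσ.2.2, hE hσ.2.1⟩
  · intro lam hlam
    have hlam0 : 0 < lam := hl0.trans hlam
    rw [Measure.restrict_apply (hmeasσ lam)]
    set S := {σ : ℝ | lam < Real.sqrt ((W σ).toReal)} ∩ (E ∩ Ioi t) with hSdef
    have hB0 : ENNReal.ofReal (lam^2) ≠ 0 := by
      simp [ENNReal.ofReal_eq_zero, not_le]; positivity
    have htail : ∀ s' ∈ S, ν {σ | s' < σ ∧ σ ∈ R} ≤ A * (ENNReal.ofReal (lam^2))⁻¹ := by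
      intro s' hs'
      have h1 : lam ^ 2 < (W s').toReal := (Real.lt_sqrt hlam0.le).1 hs'.1
      have h2 : ENNReal.ofReal (lam^2) ≤ W s' := by
        rw [← ENNReal.ofReal_toReal (hEfin s' hs'.2.1)]
        exact ENNReal.ofReal_le_ofReal h1.le
      refine le_mul_inv_of_mul_le hB0 ENNReal.ofReal_ne_top ?_
      exact le_trans (mul_le_mul_right h2 _) (hU s' hs'.2.1)
    rcases S.eq_empty_or_nonempty with hSe | hSne
    · simp [hSe]
    · have hbdd : BddBelow S := ⟨t, fun x hx => hx.2.2.le⟩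
      set r₀ := sInf S with hr₀
      have hsub : S ⊆ {r₀} ∪ {σ | r₀ < σ ∧ σ ∈ R} := by
        intro x hx
        rcases lt_or_eq_of_le (csInf_le hbdd hx) with h | h
        · exact Or.inr ⟨h, hE hx.2.1⟩
        · exact Or.inl (by simp [← h, hr₀])
      calc ν S ≤ ν ({r₀} ∪ {σ | r₀ < σ ∧ σ ∈ R}) := measure_mono hsub
        _ ≤ ν {r₀} + ν {σ | r₀ < σ ∧ σ ∈ R} := measure_union_le _ _
        _ = ν {σ | r₀ < σ ∧ σ ∈ R} := by rw [hν0, zero_add]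
        _ ≤ A * (ENNReal.ofReal (lam^2))⁻¹ := by
            rw [measure_tail_eq_iSup]
            refine iSup_le fun n => ?_
            obtain ⟨s', hs'S, hs'⟩ := exists_lt_of_csInf_lt hSne
              (by linarith [show (0:ℝ) < 1/((n:ℝ)+1) by positivity] : r₀ < r₀ + 1/((n:ℝ)+1))
            refine le_trans (measure_mono ?_) (htail s' hs'S)
            exact fun σ hσ => ⟨lt_of_le_of_lt hs'.le hσ.1, hσ.2⟩
        _ = A * ENNReal.ofReal ((lam^2)⁻¹) := by
            rw [ENNReal.ofReal_inv_of_pos (by positivity : (0:ℝ) < lam^2)]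
  · have hrw : (W t)⁻¹ = ENNReal.ofReal w⁻¹ := by
      rw [← ENNReal.ofReal_toReal hWtfin, ← hw, ENNReal.ofReal_inv_of_pos hw0]
    have h1 : A * (W t)⁻¹ * ENNReal.ofReal (Real.sqrt w)
        = A * ENNReal.ofReal (Real.sqrt w⁻¹) := by
      rw [hrw, mul_assoc, ← ENNReal.ofReal_mul (by positivity)]
      congr 2
      rw [Real.sqrt_inv]
      have hsw : 0 < Real.sqrt w := hl0
      rw [← Real.mul_self_sqrt hw0.le]
      field_simp
      rw [Real.sqrt_sq hsw.le]
    have h2 : A * ENNReal.ofReal (Real.sqrt w)⁻¹ = A * ENNReal.ofReal (Real.sqrt w⁻¹) := by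
      rw [Real.sqrt_inv]
    rw [h1, h2, two_mul, add_mul]

end MuckAux


open MuckAux

/-- Muckenhoupt sufficient condition, `p = 2`.
Let `a ∈ (0,∞]` and `u v : ℝ → ℝ` nonnegative measurable on `(0,a)` with `v > 0` there.
If `A₁ = sup_{0<t<a} (∫_t^a u)(∫_0^t v⁻¹)` is finite (i.e. `A₁` is an upper bound),
then for every measurable `f`,
`∫₀^a (∫₀^s f)² u(s) ds ≤ 4 A₁ ∫₀^a f(s)² v(s) ds`. -/
theorem muckenhoupt_sufficient (a : ℝ≥0∞) (ha : 0 < a) (u v : ℝ → ℝ)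
    (hu : Measurable u) (hv : Measurable v)
    (hu0 : ∀ s, 0 < s → ENNReal.ofReal s < a → 0 ≤ u s)
    (hv0 : ∀ s, 0 < s → ENNReal.ofReal s < a → 0 < v s)
    (A₁ : ℝ)
    (hA₁ : ∀ t : ℝ, 0 < t → ENNReal.ofReal t < a →
      (∫⁻ s in {s : ℝ | t < s ∧ ENNReal.ofReal s < a}, ENNReal.ofReal (u s)) *
        (∫⁻ s in Ioo (0 : ℝ) t, ENNReal.ofReal ((v s)⁻¹)) ≤ ENNReal.ofReal A₁) :
    ∀ f : ℝ → ℝ, Measurable f →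
      ∫⁻ s in {s : ℝ | 0 < s ∧ ENNReal.ofReal s < a},
          ENNReal.ofReal (|∫ t in (0 : ℝ)..s, f t| ^ 2 * u s)
        ≤ ENNReal.ofReal (4 * A₁) *
          ∫⁻ s in {s : ℝ | 0 < s ∧ ENNReal.ofReal s < a},
            ENNReal.ofReal (|f s| ^ 2 * v s) := by
  intro f hf
  classical
  set Ω : Set ℝ := {s : ℝ | 0 < s ∧ ENNReal.ofReal s < a} with hΩdef
  have hΩmeas : MeasurableSet Ω := by
    have h1 : MeasurableSet {s : ℝ | (0:ℝ) < s} := measurableSet_Ioi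
    have h2 : MeasurableSet {s : ℝ | ENNReal.ofReal s < a} :=
      ENNReal.measurable_ofReal measurableSet_Iio
    exact h1.inter h2
  set μv : Measure ℝ := volume.withDensity (fun r : ℝ => ENNReal.ofReal (v r)⁻¹) with hμv
  set W : ℝ → ℝ≥0∞ := fun t => μv (Ioo 0 t) with hWdef
  have hvinvmeas : Measurable fun r : ℝ => ENNReal.ofReal (v r)⁻¹ :=
    ENNReal.measurable_ofReal.comp hv.inv
  have humeas : Measurable fun s : ℝ => ENNReal.ofReal (u s) :=
    ENNReal.measurable_ofReal.comp hu
  have hWint : ∀ t : ℝ, W t = ∫⁻ r in Ioo 0 t, ENNReal.ofReal (v r)⁻¹ :=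
    fun t => withDensity_apply _ measurableSet_Ioo
  have hWmono : Monotone W := fun t₁ t₂ h => measure_mono (Ioo_subset_Ioo le_rfl h)
  have hWmeas : Measurable W := hWmono.measurable
  have hμv0 : ∀ x : ℝ, μv {x} = 0 := by
    intro x
    rw [hμv, withDensity_apply _ (measurableSet_singleton x),
      Measure.restrict_eq_zero.2 Real.volume_singleton, lintegral_zero_measure]
  set νu : Measure ℝ := volume.withDensity (fun s : ℝ => ENNReal.ofReal (u s)) with hνu
  have hνu0 : ∀ x : ℝ, νu {x} = 0 := by
    intro x
    rw [hνu, withDensity_apply _ (measurableSet_singleton x),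
      Measure.restrict_eq_zero.2 Real.volume_singleton, lintegral_zero_measure]
  set R : Set ℝ := {σ : ℝ | ENNReal.ofReal σ < a} with hRdef
  have hRmeas : MeasurableSet R := ENNReal.measurable_ofReal measurableSet_Iio
  have htailmeas : ∀ r : ℝ, MeasurableSet {σ : ℝ | r < σ ∧ σ ∈ R} := by
    intro r
    exact (measurableSet_Ioi : MeasurableSet (Ioi r)).inter hRmeas
  have hUdef : ∀ r : ℝ, νu {σ : ℝ | r < σ ∧ σ ∈ R}
      = ∫⁻ s in {s : ℝ | r < s ∧ ENNReal.ofReal s < a}, ENNReal.ofReal (u s) :=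
    fun r => withDensity_apply _ (htailmeas r)
  set A : ℝ≥0∞ := ENNReal.ofReal A₁ with hAdef
  have hA₁' : ∀ t : ℝ, 0 < t → ENNReal.ofReal t < a →
      νu {σ : ℝ | t < σ ∧ σ ∈ R} * W t ≤ A := by
    intro t ht hta
    rw [hUdef, hWint]
    exact hA₁ t ht hta
  set G : ℝ → ℝ≥0∞ := fun t => ENNReal.ofReal (|f t|^2 * v t) with hGdef
  set I : ℝ → ℝ≥0∞ := fun s => ENNReal.ofReal (|∫ t in (0:ℝ)..s, f t|^2 * u s) with hIdef
  set Ω' : Set ℝ := Ω ∩ {s : ℝ | W s < ∞} with hΩ'def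
  have hΩ'meas : MeasurableSet Ω' := hΩmeas.inter (hWmeas measurableSet_Iio)
  have hΩ'fin : ∀ s ∈ Ω', W s ≠ ∞ := fun s hs => LT.lt.ne hs.2
  have hΩ'sub : Ω' ⊆ R := fun s hs => hs.1.2
  have hΩmem : ∀ {t s : ℝ}, s ∈ Ω → 0 < t → t < s → t ∈ Ω := by
    intro t s hs ht hts
    exact ⟨ht, lt_trans ((ENNReal.ofReal_lt_ofReal_iff hs.1).2 hts) hs.2⟩
  have hWpos : ∀ t ∈ Ω, W t ≠ 0 := by
    intro t ht h0
    rw [hWint] at h0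
    have hsupp : Ioo (0:ℝ) t ⊆ Function.support fun r : ℝ => ENNReal.ofReal (v r)⁻¹ := by
      intro r hr
      have hvr : 0 < v r := hv0 r hr.1 (hΩmem ht hr.1 hr.2).2
      simp only [Function.mem_support, Ne, ENNReal.ofReal_eq_zero, not_le]
      positivity
    have hpos : 0 < ∫⁻ r in Ioo 0 t, ENNReal.ofReal (v r)⁻¹ := by
      rw [lintegral_pos_iff_support hvinvmeas]
      rw [Measure.restrict_apply (measurableSet_support hvinvmeas)]
      calc (0:ℝ≥0∞) < ENNReal.ofReal t := ENNReal.ofReal_pos.2 ht.1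
        _ = volume (Ioo (0:ℝ) t) := by rw [Real.volume_Ioo, sub_zero]
        _ ≤ volume ((Function.support fun r : ℝ => ENNReal.ofReal (v r)⁻¹) ∩ Ioo 0 t) :=
            measure_mono (fun x hx => ⟨hsupp hx, hx⟩)
    exact hpos.ne' h0
  set Φ : ℝ → ℝ≥0∞ :=
    fun s => ENNReal.ofReal (u s) * ENNReal.ofReal (Real.sqrt ((W s).toReal)) with hΦdef
  have hsqWmeas : Measurable fun s : ℝ => ENNReal.ofReal (Real.sqrt ((W s).toReal)) :=
    ENNReal.measurable_ofReal.comp (Real.continuous_sqrt.measurable.comp hWmeas.ennreal_toReal)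
  have hsqWinvmeas : Measurable fun s : ℝ => ENNReal.ofReal (Real.sqrt (((W s).toReal)⁻¹)) :=
    ENNReal.measurable_ofReal.comp
      (Real.continuous_sqrt.measurable.comp (hWmeas.ennreal_toReal.inv))
  have hΦmeas : Measurable Φ := humeas.mul hsqWmeas
  have hΦfin : ∀ s, Φ s ≠ ∞ := fun s => ENNReal.mul_ne_top ENNReal.ofReal_ne_top ENNReal.ofReal_ne_top
  set g : ℝ → ℝ≥0∞ := fun t => G t * ENNReal.ofReal (Real.sqrt ((W t).toReal)) with hgdef
  have hGmeas : Measurable G := by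
    apply ENNReal.measurable_ofReal.comp
    exact ((hf.abs.pow_const 2).mul hv)
  have hgmeas : Measurable g := hGmeas.mul hsqWmeas
  have hgfin : ∀ t, g t ≠ ∞ := fun t => ENNReal.mul_ne_top ENNReal.ofReal_ne_top ENNReal.ofReal_ne_top
  set hfun : ℝ → ℝ≥0∞ :=
    fun t => ENNReal.ofReal (v t)⁻¹ * ENNReal.ofReal (Real.sqrt (((W t).toReal)⁻¹)) with hhdef
  have hhmeas : Measurable hfun := hvinvmeas.mul hsqWinvmeas
  have hg0 : ∀ t : ℝ, t ≤ 0 → g t = 0 := by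
    intro t ht
    have hWt : W t = 0 := by
      rw [hWdef]
      simp only []
      rw [Ioo_eq_empty (not_lt.2 ht)]
      exact measure_empty
    show G t * ENNReal.ofReal (Real.sqrt ((W t).toReal)) = 0
    rw [hWt]
    simp
  have hmain : ∀ s ∈ Ω', I s ≤ 2 * (Φ s * ∫⁻ t in Ioo 0 s, g t) := by
    intro s hs
    have hs0 : 0 < s := hs.1.1
    have hWsfin : W s ≠ ∞ := hΩ'fin s hs
    have hstep1 : ENNReal.ofReal |∫ t in (0:ℝ)..s, f t| ≤ ∫⁻ t in Ioo 0 s, ENNReal.ofReal |f t| := by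
      rw [intervalIntegral.integral_of_le hs0.le]
      calc ENNReal.ofReal |∫ t in Ioc (0:ℝ) s, f t|
          = ↑‖∫ t in Ioc (0:ℝ) s, f t‖₊ := (Real.enorm_eq_ofReal_abs _).symm
        _ ≤ ∫⁻ t in Ioc (0:ℝ) s, ↑‖f t‖₊ := enorm_integral_le_lintegral_enorm _
        _ = ∫⁻ t in Ioc (0:ℝ) s, ENNReal.ofReal |f t| := by
            apply lintegral_congr
            intro t
            exact Real.enorm_eq_ofReal_abs _
        _ = ∫⁻ t in Ioo (0:ℝ) s, ENNReal.ofReal |f t| := (setLIntegral_congr Ioo_ae_eq_Ioc).symm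
    have hprod : ∀ t ∈ Ioo (0:ℝ) s,
        (g t) ^ (1/2:ℝ) * (hfun t) ^ (1/2:ℝ) = ENNReal.ofReal |f t| := by
      intro t ht
      have htΩ : t ∈ Ω := hΩmem hs.1 ht.1 ht.2
      have hvt : 0 < v t := hv0 t htΩ.1 htΩ.2
      have hWt0 : W t ≠ 0 := hWpos t htΩ
      have hWtfin : W t ≠ ∞ := fun hc => hWsfin (top_le_iff.1 (hc ▸ hWmono ht.2.le))
      have hwt : 0 < (W t).toReal := ENNReal.toReal_pos hWt0 hWtfin
      rw [← ENNReal.mul_rpow_of_nonneg _ _ (by norm_num : (0:ℝ) ≤ 1/2)]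
      have hgh : g t * hfun t = ENNReal.ofReal (|f t|^2) := by
        show (ENNReal.ofReal (|f t|^2 * v t) * ENNReal.ofReal (Real.sqrt ((W t).toReal)))
            * (ENNReal.ofReal (v t)⁻¹ * ENNReal.ofReal (Real.sqrt (((W t).toReal)⁻¹))) = _
        rw [← ENNReal.ofReal_mul (by positivity), ← ENNReal.ofReal_mul (by positivity),
          ← ENNReal.ofReal_mul (by positivity)]
        congr 1
        rw [Real.sqrt_inv]
        have h1 : Real.sqrt (W t).toReal ≠ 0 := ne_of_gt (Real.sqrt_pos.2 hwt)
        field_simp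
      rw [hgh, ENNReal.ofReal_rpow_of_nonneg (by positivity) (by norm_num : (0:ℝ) ≤ 1/2)]
      congr 1
      rw [← Real.rpow_natCast |f t| 2, ← Real.rpow_mul (abs_nonneg _)]
      norm_num
    have hgm : AEMeasurable (fun t => (g t)^(1/2:ℝ)) (volume.restrict (Ioo 0 s)) :=
      (hgmeas.pow_const _).aemeasurable
    have hhm : AEMeasurable (fun t => (hfun t)^(1/2:ℝ)) (volume.restrict (Ioo 0 s)) :=
      (hhmeas.pow_const _).aemeasurable
    have hCS := lintegral_sq_le_mul (volume.restrict (Ioo 0 s)) _ _ hgm hhm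
    have heq1 : ∫⁻ t in Ioo 0 s, (g t)^(1/2:ℝ) * (hfun t)^(1/2:ℝ)
        = ∫⁻ t in Ioo 0 s, ENNReal.ofReal |f t| :=
      setLIntegral_congr_fun measurableSet_Ioo hprod
    have heq2 : ∫⁻ t in Ioo 0 s, ((g t)^(1/2:ℝ))^(2:ℕ) = ∫⁻ t in Ioo 0 s, g t :=
      lintegral_congr fun t => sq_rpow_half _
    have heq3 : ∫⁻ t in Ioo 0 s, ((hfun t)^(1/2:ℝ))^(2:ℕ) = ∫⁻ t in Ioo 0 s, hfun t :=
      lintegral_congr fun t => sq_rpow_half _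
    have hkey : (∫⁻ t in Ioo 0 s, ENNReal.ofReal |f t|)^(2:ℕ)
        ≤ (∫⁻ t in Ioo 0 s, g t) * (∫⁻ t in Ioo 0 s, hfun t) := by
      rw [← heq1, ← heq2, ← heq3]
      exact hCS
    have hH : ∫⁻ t in Ioo 0 s, hfun t ≤ 2 * ENNReal.ofReal (Real.sqrt ((W s).toReal)) := by
      have hψmeas : Measurable fun r : ℝ =>
          ENNReal.ofReal (Real.sqrt (((μv (Ioo 0 r)).toReal)⁻¹)) := hsqWinvmeas
      have hconv : ∫⁻ t in Ioo 0 s, hfun t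
          = ∫⁻ t in Ioo 0 s,
              ENNReal.ofReal (Real.sqrt (((μv (Ioo 0 t)).toReal)⁻¹)) ∂μv := by
        rw [hμv, restrict_withDensity measurableSet_Ioo,
          lintegral_withDensity_eq_lintegral_mul _ hvinvmeas hψmeas]
        rfl
      rw [hconv]
      exact key1 μv hμv0 s hWsfin (hWpos s hs.1)
    calc I s = ENNReal.ofReal (|∫ t in (0:ℝ)..s, f t|^2) * ENNReal.ofReal (u s) := by
          show ENNReal.ofReal (|∫ t in (0:ℝ)..s, f t|^2 * u s) = _
          exact ENNReal.ofReal_mul (by positivity)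
      _ = (ENNReal.ofReal |∫ t in (0:ℝ)..s, f t|)^(2:ℕ) * ENNReal.ofReal (u s) := by
          rw [ENNReal.ofReal_pow (abs_nonneg _)]
      _ ≤ ((∫⁻ t in Ioo 0 s, g t) * (∫⁻ t in Ioo 0 s, hfun t)) * ENNReal.ofReal (u s) :=
          mul_le_mul_left (le_trans (pow_le_pow_left' hstep1 2) hkey) _
      _ ≤ ((∫⁻ t in Ioo 0 s, g t) * (2 * ENNReal.ofReal (Real.sqrt ((W s).toReal))))
            * ENNReal.ofReal (u s) :=
          mul_le_mul_left (mul_le_mul_right hH _) _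
      _ = 2 * (Φ s * ∫⁻ t in Ioo 0 s, g t) := by
          show _ = 2 * ((ENNReal.ofReal (u s) * ENNReal.ofReal (Real.sqrt ((W s).toReal)))
            * ∫⁻ t in Ioo 0 s, g t)
          ring
  set K : ℝ → ℝ≥0∞ := fun t => ∫⁻ s' in Ω' ∩ Ioi t, Φ s' with hKdef
  have hswap : ∫⁻ s in Ω', Φ s * ∫⁻ t in Ioo 0 s, g t = ∫⁻ t, K t * g t := by
    set F2 : ℝ × ℝ → ℝ≥0∞ :=
      fun p => Set.indicator {q : ℝ × ℝ | q.1 ∈ Ω' ∧ 0 < q.2 ∧ q.2 < q.1}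
        (fun q => Φ q.1 * g q.2) p with hF2
    have hsetmeas : MeasurableSet {q : ℝ × ℝ | q.1 ∈ Ω' ∧ 0 < q.2 ∧ q.2 < q.1} := by
      have h1 : MeasurableSet {q : ℝ × ℝ | q.1 ∈ Ω'} := measurable_fst hΩ'meas
      have h2 : MeasurableSet {q : ℝ × ℝ | (0:ℝ) < q.2} :=
        measurable_snd (measurableSet_Ioi : MeasurableSet (Ioi (0:ℝ)))
      have h3 : MeasurableSet {q : ℝ × ℝ | q.2 < q.1} := measurableSet_lt measurable_snd measurable_fst
      exact h1.inter (h2.inter h3)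
    have hF2meas : Measurable F2 :=
      ((hΦmeas.comp measurable_fst).mul (hgmeas.comp measurable_snd)).indicator hsetmeas
    have hL : ∫⁻ s in Ω', Φ s * ∫⁻ t in Ioo 0 s, g t = ∫⁻ s, ∫⁻ t, F2 (s, t) := by
      rw [← lintegral_indicator hΩ'meas]
      apply lintegral_congr
      intro s
      by_cases hsΩ : s ∈ Ω'
      · rw [indicator_of_mem hsΩ]
        have hpt : ∀ t : ℝ, F2 (s, t) = (Ioo (0:ℝ) s).indicator (fun t => Φ s * g t) t := by
          intro t
          by_cases ht : t ∈ Ioo (0:ℝ) s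
          · rw [indicator_of_mem ht]
            show Set.indicator {q : ℝ × ℝ | q.1 ∈ Ω' ∧ 0 < q.2 ∧ q.2 < q.1} (fun q => Φ q.1 * g q.2) (s,t) = Φ s * g t
            have hm : ((s,t) : ℝ × ℝ) ∈ {q : ℝ × ℝ | q.1 ∈ Ω' ∧ 0 < q.2 ∧ q.2 < q.1} := ⟨hsΩ, ht.1, ht.2⟩
            exact indicator_of_mem hm _
          · rw [indicator_of_notMem ht]
            show Set.indicator {q : ℝ × ℝ | q.1 ∈ Ω' ∧ 0 < q.2 ∧ q.2 < q.1} (fun q => Φ q.1 * g q.2) (s,t) = 0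
            exact indicator_of_notMem (fun hmem => ht ⟨hmem.2.1, hmem.2.2⟩) _
        calc Φ s * ∫⁻ t in Ioo 0 s, g t
            = ∫⁻ t in Ioo 0 s, Φ s * g t := (lintegral_const_mul' _ _ (hΦfin s)).symm
          _ = ∫⁻ t, (Ioo (0:ℝ) s).indicator (fun t => Φ s * g t) t :=
              (lintegral_indicator measurableSet_Ioo _).symm
          _ = ∫⁻ t, F2 (s, t) := lintegral_congr fun t => (hpt t).symm
      · rw [indicator_of_notMem hsΩ]
        have hpt : ∀ t : ℝ, F2 (s, t) = 0 := by
          intro t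
          show Set.indicator {q : ℝ × ℝ | q.1 ∈ Ω' ∧ 0 < q.2 ∧ q.2 < q.1} (fun q => Φ q.1 * g q.2) (s,t) = 0
          exact indicator_of_notMem (fun hmem => hsΩ hmem.1) _
        rw [lintegral_congr hpt, lintegral_zero]
    have hRres : ∀ t : ℝ, ∫⁻ s, F2 (s, t) = K t * g t := by
      intro t
      by_cases ht : 0 < t
      · have hpt : ∀ s : ℝ, F2 (s, t) = (Ω' ∩ Ioi t).indicator (fun s => Φ s * g t) s := by
          intro s
          by_cases hsm : s ∈ Ω' ∩ Ioi t
          · rw [indicator_of_mem hsm]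
            show Set.indicator {q : ℝ × ℝ | q.1 ∈ Ω' ∧ 0 < q.2 ∧ q.2 < q.1} (fun q => Φ q.1 * g q.2) (s,t) = Φ s * g t
            have hm : ((s,t) : ℝ × ℝ) ∈ {q : ℝ × ℝ | q.1 ∈ Ω' ∧ 0 < q.2 ∧ q.2 < q.1} := ⟨hsm.1, ht, hsm.2⟩
            exact indicator_of_mem hm _
          · rw [indicator_of_notMem hsm]
            show Set.indicator {q : ℝ × ℝ | q.1 ∈ Ω' ∧ 0 < q.2 ∧ q.2 < q.1} (fun q => Φ q.1 * g q.2) (s,t) = 0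
            exact indicator_of_notMem (fun hmem => hsm ⟨hmem.1, hmem.2.2⟩) _
        rw [lintegral_congr hpt, lintegral_indicator (hΩ'meas.inter measurableSet_Ioi),
          lintegral_mul_const' _ _ (hgfin t)]
      · have hgt : g t = 0 := hg0 t (not_lt.1 ht)
        have hpt : ∀ s : ℝ, F2 (s, t) = 0 := by
          intro s
          show Set.indicator {q : ℝ × ℝ | q.1 ∈ Ω' ∧ 0 < q.2 ∧ q.2 < q.1} (fun q => Φ q.1 * g q.2) (s,t) = 0
          exact indicator_of_notMem (fun hmem => ht hmem.2.1) _
        rw [lintegral_congr hpt, lintegral_zero, hgt, mul_zero]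
    rw [hL, lintegral_lintegral_swap hF2meas.aemeasurable]
    exact lintegral_congr hRres
  have hfinal : ∀ t : ℝ, K t * g t ≤ 2 * A * Ω.indicator G t := by
    intro t
    rcases (Ω' ∩ Ioi t).eq_empty_or_nonempty with he | hne
    · have : K t = 0 := by
        rw [hKdef]
        simp only []
        rw [he, Measure.restrict_empty, lintegral_zero_measure]
      rw [this, zero_mul]
      exact zero_le
    · obtain ⟨s₀, hs₀⟩ := hne
      by_cases ht : 0 < t
      · have htΩ : t ∈ Ω := hΩmem hs₀.1.1 ht hs₀.2
        have hWt0 : W t ≠ 0 := hWpos t htΩ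
        have hWtfin : W t ≠ ∞ :=
          fun hc => (hΩ'fin s₀ hs₀.1) (top_le_iff.1 (hc ▸ hWmono hs₀.2.le))
        have hwt : 0 < (W t).toReal := ENNReal.toReal_pos hWt0 hWtfin
        have hKbound : K t ≤ 2 * A * ENNReal.ofReal (Real.sqrt (((W t).toReal)⁻¹)) := by
          have hconv : K t = ∫⁻ s' in Ω' ∩ Ioi t,
              ENNReal.ofReal (Real.sqrt ((W s').toReal)) ∂νu := by
            rw [hKdef, hνu, restrict_withDensity (hΩ'meas.inter measurableSet_Ioi),
              lintegral_withDensity_eq_lintegral_mul _ humeas hsqWmeas]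
            rfl
          rw [hconv]
          refine key2 νu hνu0 W hWmono hWmeas R Ω' hΩ'sub hΩ'meas A ENNReal.ofReal_ne_top
            ?_ hΩ'fin t hWt0 hWtfin (hA₁' t ht htΩ.2)
          intro r hr
          exact hA₁' r hr.1.1 hr.1.2
        have hone : ENNReal.ofReal (Real.sqrt (((W t).toReal)⁻¹))
            * ENNReal.ofReal (Real.sqrt ((W t).toReal)) = 1 := by
          rw [← ENNReal.ofReal_mul (Real.sqrt_nonneg _), Real.sqrt_inv,
            inv_mul_cancel₀ (ne_of_gt (Real.sqrt_pos.2 hwt)), ENNReal.ofReal_one]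
        calc K t * g t
            ≤ (2 * A * ENNReal.ofReal (Real.sqrt (((W t).toReal)⁻¹))) * g t :=
              mul_le_mul_left hKbound _
          _ = 2 * A * G t * (ENNReal.ofReal (Real.sqrt (((W t).toReal)⁻¹))
                * ENNReal.ofReal (Real.sqrt ((W t).toReal))) := by
              show (2 * A * ENNReal.ofReal (Real.sqrt (((W t).toReal)⁻¹)))
                * (G t * ENNReal.ofReal (Real.sqrt ((W t).toReal))) = _
              ring
          _ = 2 * A * G t := by rw [hone, mul_one]
          _ = 2 * A * Ω.indicator G t := by rw [indicator_of_mem htΩ]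
      · have hgt : g t = 0 := hg0 t (not_lt.1 ht)
        rw [hgt, mul_zero]
        exact zero_le
  have hnull : ∫⁻ s in Ω \ Ω', I s = 0 := by
    rcases (Ω \ Ω').eq_empty_or_nonempty with he | hne
    · rw [he, Measure.restrict_empty, lintegral_zero_measure]
    · have hbdd : BddBelow (Ω \ Ω') := ⟨0, fun x hx => hx.1.1.le⟩
      set t₀ := sInf (Ω \ Ω') with ht₀
      have ht₀0 : 0 ≤ t₀ := le_csInf hne (fun x hx => hx.1.1.le)
      have hWinf : ∀ x ∈ Ω \ Ω', W x = ∞ := by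
        intro x hx
        by_contra hxx
        exact hx.2 ⟨hx.1, lt_top_iff_ne_top.2 hxx⟩
      have key0 : ∀ n : ℕ, ∫⁻ σ in {σ : ℝ | t₀ + 1/(n+1) < σ ∧ ENNReal.ofReal σ < a},
          ENNReal.ofReal (u σ) = 0 := by
        intro n
        set r := t₀ + 1/((n:ℝ)+1) with hr
        have hrpos : 0 < r := by positivity
        by_cases hra : ENNReal.ofReal r < a
        · obtain ⟨t', ht'mem, ht'lt⟩ := exists_lt_of_csInf_lt hne
            (lt_add_of_pos_right t₀ (by positivity : (0:ℝ) < 1/((n:ℝ)+1)))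
          have hWr : W r = ∞ := top_le_iff.1 ((hWinf t' ht'mem) ▸ hWmono ht'lt.le)
          have hcontra := hA₁' r hrpos hra
          rw [hWr] at hcontra
          rw [← hUdef]
          by_contra hne0
          rw [ENNReal.mul_top hne0] at hcontra
          exact ENNReal.ofReal_ne_top (top_le_iff.1 hcontra)
        · have hempty : {σ : ℝ | r < σ ∧ ENNReal.ofReal σ < a} = ∅ := by
            ext σ
            simp only [mem_setOf_eq, mem_empty_iff_false, iff_false, not_and]
            intro hσ hσa
            exact hra (lt_of_le_of_lt (ENNReal.ofReal_le_ofReal hσ.le) hσa)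
          rw [hempty, Measure.restrict_empty, lintegral_zero_measure]
      have keyE : ∫⁻ σ in {σ : ℝ | t₀ < σ ∧ ENNReal.ofReal σ < a},
          ENNReal.ofReal (u σ) = 0 := by
        have hcover : {σ : ℝ | t₀ < σ ∧ ENNReal.ofReal σ < a}
            = ⋃ n : ℕ, {σ : ℝ | t₀ + 1/(n+1) < σ ∧ ENNReal.ofReal σ < a} := by
          ext x
          simp only [mem_setOf_eq, mem_iUnion]
          constructor
          · rintro ⟨hx, hxa⟩
            obtain ⟨n, hn⟩ := exists_nat_add_lt hx
            exact ⟨n, hn, hxa⟩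
          · rintro ⟨n, hn, hxa⟩
            have : (0:ℝ) < 1/((n:ℝ)+1) := by positivity
            exact ⟨by linarith, hxa⟩
        refine le_antisymm ?_ (zero_le)
        rw [hcover]
        refine le_trans (lintegral_iUnion_le _ _) ?_
        simp only [key0, tsum_zero, le_refl]
      have hsub2 : Ω \ Ω' ⊆ {t₀} ∪ {σ : ℝ | t₀ < σ ∧ ENNReal.ofReal σ < a} := by
        intro x hx
        rcases lt_or_eq_of_le (csInf_le hbdd hx) with hlt | heq
        · exact Or.inr ⟨hlt, hx.1.2⟩
        · exact Or.inl (by simp [← heq, ht₀])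
      have hz1 : ∫⁻ s in {t₀}, I s = 0 := by
        rw [Measure.restrict_eq_zero.2 Real.volume_singleton, lintegral_zero_measure]
      have hz2 : ∫⁻ s in {σ : ℝ | t₀ < σ ∧ ENNReal.ofReal σ < a}, I s = 0 := by
        have hae := (lintegral_eq_zero_iff humeas).1 keyE
        have hIae : I =ᵐ[volume.restrict {σ : ℝ | t₀ < σ ∧ ENNReal.ofReal σ < a}] 0 := by
          filter_upwards [hae] with σ hσ
          have hu0' : u σ ≤ 0 := by
            rwa [Pi.zero_apply, ENNReal.ofReal_eq_zero] at hσ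
          show ENNReal.ofReal (|∫ t in (0:ℝ)..σ, f t|^2 * u σ) = 0
          rw [ENNReal.ofReal_eq_zero]
          exact mul_nonpos_iff.2 (Or.inl ⟨by positivity, hu0'⟩)
        rw [lintegral_congr_ae hIae]
        simp
      refine le_antisymm ?_ (zero_le)
      refine le_trans (lintegral_mono_set hsub2) ?_
      refine le_trans (lintegral_union_le _ _ _) ?_
      rw [hz1, hz2, add_zero]
  show ∫⁻ s in Ω, I s ≤ ENNReal.ofReal (4 * A₁) * ∫⁻ s in Ω, G s
  have h4A : ENNReal.ofReal (4 * A₁) = 4 * A := by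
    rw [ENNReal.ofReal_mul (by norm_num : (0:ℝ) ≤ 4), hAdef]
    norm_num
  calc ∫⁻ s in Ω, I s ≤ (∫⁻ s in Ω', I s) + ∫⁻ s in Ω \ Ω', I s := by
        refine le_trans (lintegral_mono_set ?_) (lintegral_union_le _ _ _)
        intro x hx
        by_cases hx' : x ∈ Ω'
        · exact Or.inl hx'
        · exact Or.inr ⟨hx, hx'⟩
    _ = ∫⁻ s in Ω', I s := by rw [hnull]; exact add_zero _
    _ ≤ ∫⁻ s in Ω', 2 * (Φ s * ∫⁻ t in Ioo 0 s, g t) := setLIntegral_mono' hΩ'meas hmain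
    _ = 2 * ∫⁻ s in Ω', Φ s * ∫⁻ t in Ioo 0 s, g t :=
        lintegral_const_mul' _ _ ENNReal.ofNat_ne_top
    _ = 2 * ∫⁻ t, K t * g t := by rw [hswap]
    _ ≤ 2 * ∫⁻ t, 2 * A * Ω.indicator G t := mul_le_mul_right (lintegral_mono hfinal) _
    _ = ENNReal.ofReal (4 * A₁) * ∫⁻ s in Ω, G s := by
        rw [lintegral_const_mul' _ _
          (ENNReal.mul_ne_top ENNReal.ofNat_ne_top ENNReal.ofReal_ne_top),
          lintegral_indicator hΩmeas, h4A]
        ring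
end

section
/- Let a ∈ (0,∞], and let u, v be nonnegative measurable functions on (0,a) with v > 0. If the inequality ∫₀^a |∫₀^s f(t) dt|² u(s) ds ≤ C ∫₀^a |f(s)|² v(s) ds holds for all measurable f on (0,a), then A₁ := sup_{0<t<a} (∫_t^a u(s) ds)(∫₀^t v(s)^{-1} ds) ≤ C. -/
open MeasureTheory Set
open scoped ENNReal

private lemma sup_ofReal_min (x : ℝ) :
    (⨆ n : ℕ, ENNReal.ofReal (min x n)) = ENNReal.ofReal x := by
  apply le_antisymm
  · exact iSup_le fun n => ENNReal.ofReal_le_ofReal (min_le_left _ _)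
  · obtain ⟨n, hn⟩ := exists_nat_ge x
    have : ENNReal.ofReal x = ENNReal.ofReal (min x n) := by
      rw [min_eq_left hn]
    rw [this]
    exact le_iSup (fun n : ℕ => ENNReal.ofReal (min x n)) n

/-- Muckenhoupt necessary condition, `p = q = 2`.
If the one-dimensional weighted Hardy inequality with constant `C` holds for all
measurable `f`, then `A₁ := sup_{0<t<a} (∫_t^a u)(∫₀^t v⁻¹) ≤ C`. -/
theorem muckenhoupt_necessary (a : ℝ≥0∞) (ha : 0 < a) (u v : ℝ → ℝ)
    (hu : Measurable u) (hv : Measurable v)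
    (hu0 : ∀ s, 0 < s → ENNReal.ofReal s < a → 0 ≤ u s)
    (hv0 : ∀ s, 0 < s → ENNReal.ofReal s < a → 0 < v s)
    (C : ℝ)
    (hC : ∀ f : ℝ → ℝ, Measurable f →
      ∫⁻ s in {s : ℝ | 0 < s ∧ ENNReal.ofReal s < a},
          ENNReal.ofReal (|∫ t in (0 : ℝ)..s, f t| ^ 2 * u s)
        ≤ ENNReal.ofReal C *
          ∫⁻ s in {s : ℝ | 0 < s ∧ ENNReal.ofReal s < a},
            ENNReal.ofReal (|f s| ^ 2 * v s)) :
    ∀ t : ℝ, 0 < t → ENNReal.ofReal t < a →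
      (∫⁻ s in {s : ℝ | t < s ∧ ENNReal.ofReal s < a}, ENNReal.ofReal (u s)) *
        (∫⁻ s in Ioo (0 : ℝ) t, ENNReal.ofReal ((v s)⁻¹)) ≤ ENNReal.ofReal C := by
  intro t ht hta
  set S : Set ℝ := {s : ℝ | 0 < s ∧ ENNReal.ofReal s < a} with hS
  set T : Set ℝ := {s : ℝ | t < s ∧ ENNReal.ofReal s < a} with hT
  have hTmeas : MeasurableSet T := by
    have : T = Ioi t ∩ ENNReal.ofReal ⁻¹' (Iio a) := by
      ext s; simp [hT, mem_Ioi, mem_Iio, and_comm]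
    rw [this]
    exact measurableSet_Ioi.inter (ENNReal.measurable_ofReal measurableSet_Iio)
  set U : ℝ≥0∞ := ∫⁻ s in T, ENNReal.ofReal (u s) with hU
  -- positivity of v on Ioo 0 t
  have hvpos : ∀ s ∈ Ioo (0 : ℝ) t, 0 < v s := by
    intro s hs
    exact hv0 s hs.1 (lt_trans ((ENNReal.ofReal_lt_ofReal_iff ht).mpr hs.2) hta)
  -- the key inequality for the truncated test functions
  have key : ∀ n : ℕ,
      U * (∫⁻ s in Ioo (0 : ℝ) t, ENNReal.ofReal (min (v s)⁻¹ n)) ≤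
        ENNReal.ofReal C := by
    intro n
    set g : ℝ → ℝ := fun s => min (v s)⁻¹ n with hg
    set f : ℝ → ℝ := (Ioo (0 : ℝ) t).indicator g with hf
    have hgmeas : Measurable g := (hv.inv.min measurable_const)
    have hfmeas : Measurable f := hgmeas.indicator measurableSet_Ioo
    have hgnn : ∀ s ∈ Ioo (0 : ℝ) t, 0 ≤ g s := by
      intro s hs
      exact le_min (le_of_lt (inv_pos.mpr (hvpos s hs))) (Nat.cast_nonneg n)
    -- integrability
    have hgint : IntegrableOn g (Ioo (0 : ℝ) t) := by
      apply Integrable.mono' (integrableOn_const (C := (n : ℝ)) measure_Ioo_lt_top.ne)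
        hgmeas.aestronglyMeasurable
      filter_upwards [ae_restrict_mem measurableSet_Ioo] with s hs
      rw [Real.norm_eq_abs, abs_of_nonneg (hgnn s hs)]
      exact min_le_right _ _
    set b : ℝ := ∫ s in Ioo (0 : ℝ) t, g s with hb
    have hbnn : 0 ≤ b := setIntegral_nonneg measurableSet_Ioo hgnn
    set B : ℝ≥0∞ := ∫⁻ s in Ioo (0 : ℝ) t, ENNReal.ofReal (g s) with hB
    have hbB : ENNReal.ofReal b = B := by
      rw [hb, hB]
      exact ofReal_integral_eq_lintegral_ofReal hgint
        ((ae_restrict_mem measurableSet_Ioo).mono hgnn)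
    have hBfin : B ≠ ⊤ := by rw [← hbB]; exact ENNReal.ofReal_ne_top
    -- evaluate the inner integral for s ≥ t
    have hinner : ∀ s : ℝ, t ≤ s → (∫ x in (0 : ℝ)..s, f x) = b := by
      intro s hts
      rw [hf, intervalIntegral.integral_of_le (le_trans ht.le hts),
        ← integral_indicator measurableSet_Ioc]
      rw [hb, ← integral_indicator measurableSet_Ioo]
      congr 1
      ext x
      simp only [indicator_indicator]
      rw [inter_eq_right.mpr]
      intro x hx
      exact ⟨hx.1, (lt_of_lt_of_le hx.2 hts).le⟩
    -- lower bound for the LHS of hC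
    have hLHS : B * B * U ≤
        ∫⁻ s in S, ENNReal.ofReal (|∫ x in (0 : ℝ)..s, f x| ^ 2 * u s) := by
      have hsub : T ⊆ S := fun s hs => ⟨lt_trans ht hs.1, hs.2⟩
      calc B * B * U = ∫⁻ s in T, ENNReal.ofReal (|∫ x in (0 : ℝ)..s, f x| ^ 2 * u s) := by
            rw [setLIntegral_congr_fun_ae hTmeas (ae_of_all _ (fun s hs => by
              rw [hinner s hs.1.le, ENNReal.ofReal_mul (by positivity),
                abs_of_nonneg hbnn, sq, ENNReal.ofReal_mul hbnn, hbB]))]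
            rw [lintegral_const_mul _ hu.ennreal_ofReal]
        _ ≤ _ := lintegral_mono' (Measure.restrict_mono hsub le_rfl) le_rfl
    -- upper bound for the RHS of hC
    have hRHS : (∫⁻ s in S, ENNReal.ofReal (|f s| ^ 2 * v s)) ≤ B := by
      have hpt : ∀ s : ℝ, ENNReal.ofReal (|f s| ^ 2 * v s) ≤
          (Ioo (0 : ℝ) t).indicator (fun x => ENNReal.ofReal (g x)) s := by
        intro s
        by_cases hs : s ∈ Ioo (0 : ℝ) t
        · rw [indicator_of_mem hs, hf, indicator_of_mem hs]
          apply ENNReal.ofReal_le_ofReal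
          rw [abs_of_nonneg (hgnn s hs), sq]
          have hvs := hvpos s hs
          calc g s * g s * v s ≤ (v s)⁻¹ * g s * v s := by
                apply mul_le_mul_of_nonneg_right
                  (mul_le_mul_of_nonneg_right (min_le_left _ _) (hgnn s hs)) hvs.le
            _ = g s := by field_simp
        · rw [indicator_of_notMem hs, hf, indicator_of_notMem hs]
          simp
      calc (∫⁻ s in S, ENNReal.ofReal (|f s| ^ 2 * v s))
          ≤ ∫⁻ s in S, (Ioo (0 : ℝ) t).indicator (fun x => ENNReal.ofReal (g x)) s :=
            lintegral_mono fun s => hpt s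
        _ ≤ ∫⁻ s, (Ioo (0 : ℝ) t).indicator (fun x => ENNReal.ofReal (g x)) s :=
            setLIntegral_le_lintegral _ _
        _ = B := by rw [hB]; exact lintegral_indicator measurableSet_Ioo _
    -- combine
    have hcomb : B * B * U ≤ ENNReal.ofReal C * B :=
      le_trans hLHS (le_trans (hC f hfmeas) (mul_le_mul_right hRHS _))
    rcases eq_or_ne B 0 with hB0 | hB0
    · rw [hB0, mul_zero]; exact zero_le
    · have h2 : (U * B) * B ≤ ENNReal.ofReal C * B := by
        calc (U * B) * B = B * B * U := by ring
          _ ≤ ENNReal.ofReal C * B := hcomb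
      exact (ENNReal.mul_le_mul_iff_left hB0 hBfin).mp h2
  -- monotone convergence to remove the truncation
  have hmono : Monotone fun n : ℕ => fun s : ℝ => ENNReal.ofReal (min (v s)⁻¹ n) := by
    intro m n hmn s
    exact ENNReal.ofReal_le_ofReal (min_le_min le_rfl (Nat.cast_le.mpr hmn))
  have hsup : (∫⁻ s in Ioo (0 : ℝ) t, ENNReal.ofReal ((v s)⁻¹)) =
      ⨆ n : ℕ, ∫⁻ s in Ioo (0 : ℝ) t, ENNReal.ofReal (min (v s)⁻¹ n) := by
    rw [← lintegral_iSup (f := fun n s => ENNReal.ofReal (min (v s)⁻¹ n)) (fun n => (hv.inv.min measurable_const).ennreal_ofReal) hmono]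
    congr 1
    ext s
    exact (sup_ofReal_min _).symm
  rw [hsup, ENNReal.mul_iSup]
  exact iSup_le key
end

section
/- Let a ∈ (0,∞], and let u, v be nonnegative measurable functions on (0,a) with v > 0. If A₂ := sup_{0<t<a} (∫₀^t u(s) ds)(∫_t^a v(s)^{-1} ds) < ∞, then for every measurable f on (0,a): ∫₀^a |∫_s^a f(t) dt|² u(s) ds ≤ 4 A₂ ∫₀^a |f(s)|² v(s) ds. -/
open MeasureTheory Set
open scoped ENNReal

lemma aux_cover (μ : Measure ℝ) (A : Set ℝ) (x : ℝ≥0∞) (C : ℚ → Set ℝ)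
    (hC : ∀ q, μ (C q) ≤ x) (hdir : Directed (· ⊆ ·) C)
    (hcov : ∀ s t, s ∈ A → t ∈ A → s < t → s ∈ ⋃ q, C q ∨ t ∈ ⋃ q, C q)
    (hnull : ∀ B : Set ℝ, B.Subsingleton → μ B = 0) : μ A ≤ x := by
  have hsub : A ⊆ (⋃ q, C q) ∪ (A \ ⋃ q, C q) := by
    intro s hs
    by_cases h : s ∈ ⋃ q, C q
    · exact Or.inl h
    · exact Or.inr ⟨hs, h⟩
  have hss : (A \ ⋃ q, C q).Subsingleton := by
    intro s hs t ht
    by_contra hne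
    rcases lt_or_gt_of_ne hne with hlt | hlt
    · rcases hcov s t hs.1 ht.1 hlt with h | h
      · exact hs.2 h
      · exact ht.2 h
    · rcases hcov t s ht.1 hs.1 hlt with h | h
      · exact ht.2 h
      · exact hs.2 h
  calc μ A ≤ μ ((⋃ q, C q) ∪ (A \ ⋃ q, C q)) := measure_mono hsub
    _ ≤ μ (⋃ q, C q) + μ (A \ ⋃ q, C q) := measure_union_le _ _
    _ ≤ x + 0 := by
        refine add_le_add ?_ (le_of_eq (hnull _ hss))
        rw [Directed.measure_iUnion hdir]
        exact iSup_le hC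
    _ = x := add_zero x

lemma aux_layer (y : ℝ≥0∞) (hy : 0 < y) :
    ∫⁻ x in Ioi (0:ℝ), {x : ℝ | y < ENNReal.ofReal x}.indicator
      (fun x => ENNReal.ofReal ((1/2) * x ^ (-(3:ℝ)/2))) x = y ^ (-(1/2 : ℝ)) := by
  rcases eq_or_ne y ∞ with rfl | hyt
  · have : {x : ℝ | (∞:ℝ≥0∞) < ENNReal.ofReal x} = ∅ := by
      ext x; simp [lt_asymm ENNReal.ofReal_lt_top]
    simp [this, ENNReal.top_rpow_of_neg (by norm_num : -(1/2:ℝ) < 0)]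
  · set c := y.toReal with hcdef
    have hc : 0 < c := ENNReal.toReal_pos hy.ne' hyt
    have hset : {x : ℝ | y < ENNReal.ofReal x} = Ioi c := by
      ext x
      simp only [mem_setOf_eq, mem_Ioi]
      exact ENNReal.lt_ofReal_iff_toReal_lt hyt
    rw [hset, lintegral_indicator measurableSet_Ioi, Measure.restrict_restrict measurableSet_Ioi]
    have hint : Ioi c ∩ Ioi (0:ℝ) = Ioi c := inter_eq_self_of_subset_left
      (fun x hx => lt_trans hc hx)
    rw [hint]
    have hInt : IntegrableOn (fun x : ℝ => (1/2) * x ^ (-(3:ℝ)/2)) (Ioi c) :=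
      (integrableOn_Ioi_rpow_of_lt (by norm_num) hc).const_mul _
    have hnn : 0 ≤ᵐ[volume.restrict (Ioi c)] fun x : ℝ => (1/2) * x ^ (-(3:ℝ)/2) := by
      filter_upwards [ae_restrict_mem measurableSet_Ioi] with x hx
      have hx0 : (0:ℝ) < x := lt_trans hc hx
      positivity
    rw [← ofReal_integral_eq_lintegral_ofReal hInt hnn]
    rw [MeasureTheory.integral_const_mul, integral_Ioi_rpow_of_lt (by norm_num) hc]
    have : (1/2 : ℝ) * (-c ^ (-(3:ℝ)/2 + 1) / (-(3:ℝ)/2 + 1)) = c ^ (-(1/2):ℝ) := by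
      rw [show (-(3:ℝ)/2 + 1) = -(1/2) by norm_num]; ring
    rw [this, ← ENNReal.ofReal_rpow_of_pos hc, ENNReal.ofReal_toReal hyt]

set_option maxHeartbeats 2000000 in
lemma aux_LC (ν : Measure ℝ) [SFinite ν] (h : ℝ → ℝ≥0∞) (hm : Measurable h)
    (M : ℝ≥0∞) (h1 : ∀ x : ℝ≥0∞, ν {s | h s < x} ≤ x) (h2 : ν Set.univ ≤ M) :
    ∫⁻ s, h s ^ (-(1/2 : ℝ)) ∂ν ≤ 2 * M ^ ((1/2 : ℝ)) := by
  rcases eq_or_ne M ∞ with rfl | hMt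
  · rw [ENNReal.top_rpow_of_pos (by norm_num)]
    simp
  rcases eq_or_ne M 0 with rfl | hM0
  · have hν : ν = 0 := Measure.measure_univ_eq_zero.mp (le_antisymm h2 zero_le)
    simp [hν]
  -- the zero set of h is ν-null
  have hz : ν {s | h s = 0} = 0 := by
    by_contra hz
    have hle : ∀ x : ℝ≥0∞, 0 < x → ν {s | h s = 0} ≤ x := by
      intro x hx
      refine le_trans (measure_mono ?_) (h1 x)
      intro s hs
      simp only [mem_setOf_eq] at hs ⊢
      rw [hs]; exact hx
    rcases eq_or_ne (ν {s | h s = 0}) ∞ with he | he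
    · have := hle 1 one_pos
      rw [he] at this
      exact absurd this (not_le.mpr ENNReal.one_lt_top)
    · have hpos : 0 < ν {s | h s = 0} := pos_iff_ne_zero.mpr hz
      have := hle (ν {s | h s = 0} / 2) (ENNReal.half_pos hz)
      exact absurd this (not_le.mpr (ENNReal.half_lt_self hz he))
  have hae : ∀ᵐ s ∂ν, 0 < h s := by
    rw [ae_iff]
    convert hz using 2
    ext s
    simp [pos_iff_ne_zero]
  set c : ℝ → ℝ≥0∞ := fun x => ENNReal.ofReal ((1/2) * x ^ (-(3:ℝ)/2)) with hcdef
  have hcm : Measurable c := by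
    apply Measurable.ennreal_ofReal
    fun_prop
  have key : ∫⁻ s, h s ^ (-(1/2:ℝ)) ∂ν
      = ∫⁻ s, (∫⁻ x in Ioi (0:ℝ), {x : ℝ | h s < ENNReal.ofReal x}.indicator c x) ∂ν := by
    refine lintegral_congr_ae (μ := ν)
      (f := fun s => h s ^ (-(1/2:ℝ)))
      (g := fun s => ∫⁻ x in Ioi (0:ℝ), {x : ℝ | h s < ENNReal.ofReal x}.indicator c x) ?_
    filter_upwards [hae] with s hs
    exact (aux_layer _ hs).symm
  rw [key]
  have hswap : ∫⁻ s, (∫⁻ x in Ioi (0:ℝ), {x : ℝ | h s < ENNReal.ofReal x}.indicator c x) ∂ν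
      = ∫⁻ x in Ioi (0:ℝ), ∫⁻ s, {x : ℝ | h s < ENNReal.ofReal x}.indicator c x ∂ν := by
    apply lintegral_lintegral_swap (μ := ν) (ν := volume.restrict (Ioi (0:ℝ)))
      (f := fun s x => {x : ℝ | h s < ENNReal.ofReal x}.indicator c x)
    have hset : MeasurableSet {p : ℝ × ℝ | h p.1 < ENNReal.ofReal p.2} := by
      apply measurableSet_lt (hm.comp measurable_fst)
      exact ENNReal.measurable_ofReal.comp measurable_snd
    have : Function.uncurry (fun s x => {x : ℝ | h s < ENNReal.ofReal x}.indicator c x)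
        = {p : ℝ × ℝ | h p.1 < ENNReal.ofReal p.2}.indicator (fun p => c p.2) := by
      ext p
      rcases p with ⟨s, x⟩
      by_cases hp : h s < ENNReal.ofReal x
      · simp [Function.uncurry, indicator_of_mem, hp, mem_setOf_eq]
      · simp [Function.uncurry, indicator_of_notMem, hp, mem_setOf_eq]
    rw [this]
    exact ((hcm.comp measurable_snd).indicator hset).aemeasurable
  rw [hswap]
  have hinner : ∀ x : ℝ, ∫⁻ s, {x : ℝ | h s < ENNReal.ofReal x}.indicator c x ∂ν
      = c x * ν {s | h s < ENNReal.ofReal x} := by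
    intro x
    have : (fun s => {x : ℝ | h s < ENNReal.ofReal x}.indicator c x)
        = fun s => c x * {s : ℝ | h s < ENNReal.ofReal x}.indicator 1 s := by
      ext s
      by_cases hp : h s < ENNReal.ofReal x
      · simp [indicator_of_mem, hp, mem_setOf_eq]
      · simp [indicator_of_notMem, hp, mem_setOf_eq]
    have hms : MeasurableSet {s : ℝ | h s < ENNReal.ofReal x} := hm measurableSet_Iio
    rw [this, lintegral_const_mul _ ((measurable_one).indicator hms),
      lintegral_indicator_one hms]
  simp_rw [hinner]
  have hbound : ∫⁻ x in Ioi (0:ℝ), c x * ν {s | h s < ENNReal.ofReal x}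
      ≤ ∫⁻ x in Ioi (0:ℝ), c x * min (ENNReal.ofReal x) M := by
    refine lintegral_mono fun x => ?_
    gcongr
    exact le_min (h1 _) (le_trans (measure_mono (subset_univ _)) h2)
  refine le_trans hbound ?_
  set M' := M.toReal with hM'def
  have hM' : 0 < M' := ENNReal.toReal_pos hM0 hMt
  have hcover : Ioi (0:ℝ) ⊆ Ioo 0 M' ∪ Ici M' := by
    intro x hx
    rcases lt_or_ge x M' with hl | hl
    · exact Or.inl ⟨hx, hl⟩
    · exact Or.inr hl
  have hsplit : ∫⁻ x in Ioi (0:ℝ), c x * min (ENNReal.ofReal x) M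
      ≤ (∫⁻ x in Ioo (0:ℝ) M', c x * min (ENNReal.ofReal x) M)
        + ∫⁻ x in Ici M', c x * min (ENNReal.ofReal x) M :=
    le_trans (lintegral_mono_set hcover) (lintegral_union_le _ _ _)
  refine le_trans hsplit ?_
  have hA : (∫⁻ x in Ioo (0:ℝ) M', c x * min (ENNReal.ofReal x) M) ≤ M ^ ((1/2:ℝ)) := by
    have heq : ∀ x ∈ Ioo (0:ℝ) M', c x * min (ENNReal.ofReal x) M
        = ENNReal.ofReal ((1/2) * x ^ (-(1:ℝ)/2)) := by
      intro x hx
      have hmin : min (ENNReal.ofReal x) M = ENNReal.ofReal x := by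
        refine min_eq_left ?_
        rw [← ENNReal.ofReal_toReal hMt]
        exact ENNReal.ofReal_le_ofReal hx.2.le
      have hx0 : (0:ℝ) < x := hx.1
      rw [hmin, hcdef, ← ENNReal.ofReal_mul (by positivity)]
      congr 1
      rw [mul_assoc, ← Real.rpow_add_one hx.1.ne' (-(3:ℝ)/2)]
      norm_num
    rw [setLIntegral_congr_fun measurableSet_Ioo
      (fun x hx => heq x hx)]
    have hInt : IntegrableOn (fun x : ℝ => (1/2) * x ^ (-(1:ℝ)/2)) (Ioo 0 M') := by
      have := (intervalIntegral.intervalIntegrable_rpow' (a := 0) (b := M') (r := -(1:ℝ)/2) (by norm_num))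
      rw [intervalIntegrable_iff_integrableOn_Ioc_of_le hM'.le] at this
      exact (this.mono_set Ioo_subset_Ioc_self).const_mul _
    have hnn : 0 ≤ᵐ[volume.restrict (Ioo (0:ℝ) M')] fun x : ℝ => (1/2) * x ^ (-(1:ℝ)/2) := by
      filter_upwards [ae_restrict_mem measurableSet_Ioo] with x hx
      have hx0 : (0:ℝ) < x := hx.1
      positivity
    rw [← ofReal_integral_eq_lintegral_ofReal hInt hnn]
    rw [MeasureTheory.integral_const_mul]
    rw [← integral_Ioc_eq_integral_Ioo, ← intervalIntegral.integral_of_le hM'.le]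
    rw [integral_rpow (Or.inl (by norm_num))]
    have : (1/2 : ℝ) * ((M' ^ (-(1:ℝ)/2 + 1) - 0 ^ (-(1:ℝ)/2 + 1)) / (-(1:ℝ)/2 + 1))
        = M' ^ ((1:ℝ)/2) := by
      rw [show (-(1:ℝ)/2 + 1) = 1/2 by norm_num, Real.zero_rpow (by norm_num)]
      ring
    rw [this, ← ENNReal.ofReal_rpow_of_pos hM', ENNReal.ofReal_toReal hMt]
  have hB : (∫⁻ x in Ici M', c x * min (ENNReal.ofReal x) M) ≤ M ^ ((1/2:ℝ)) := by
    have hstep : (∫⁻ x in Ici M', c x * min (ENNReal.ofReal x) M)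
        ≤ ∫⁻ x in Ici M', c x * M := by
      refine lintegral_mono fun x => ?_
      gcongr
      exact min_le_right _ _
    refine le_trans hstep ?_
    rw [lintegral_mul_const _ hcm]
    have hIci : ∫⁻ x in Ici M', c x = ∫⁻ x in Ioi M', c x :=
      setLIntegral_congr (Ioi_ae_eq_Ici (μ := (volume : Measure ℝ)) (a := M')).symm
    have hIoi : ∫⁻ x in Ioi M', c x = M ^ (-(1/2:ℝ)) := by
      have := aux_layer M (pos_iff_ne_zero.mpr hM0)
      have hset : {x : ℝ | M < ENNReal.ofReal x} = Ioi M' := by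
        ext x
        simp only [mem_setOf_eq, mem_Ioi]
        exact ENNReal.lt_ofReal_iff_toReal_lt hMt
      rw [hset, lintegral_indicator measurableSet_Ioi,
        Measure.restrict_restrict measurableSet_Ioi] at this
      have h2' : Ioi M' ∩ Ioi (0:ℝ) = Ioi M' :=
        inter_eq_self_of_subset_left (fun x hx => lt_trans hM' hx)
      rw [h2'] at this
      simp only [hcdef]
      exact this
    have heq : M ^ (-(1/2:ℝ)) * M = M ^ ((1/2:ℝ)) := by
      calc M ^ (-(1/2:ℝ)) * M = M ^ (-(1/2:ℝ)) * M ^ (1:ℝ) := by rw [ENNReal.rpow_one]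
        _ = M ^ (-(1/2:ℝ) + 1) := (ENNReal.rpow_add _ _ hM0 hMt).symm
        _ = M ^ ((1/2:ℝ)) := by norm_num
    rw [hIci, hIoi, heq]
  calc (∫⁻ x in Ioo (0:ℝ) M', c x * min (ENNReal.ofReal x) M)
        + ∫⁻ x in Ici M', c x * min (ENNReal.ofReal x) M
      ≤ M ^ ((1/2:ℝ)) + M ^ ((1/2:ℝ)) := add_le_add hA hB
    _ = 2 * M ^ ((1/2:ℝ)) := (two_mul _).symm

section MuckAux
open MeasureTheory Set
open scoped ENNReal

variable (a : ℝ≥0∞) (u v : ℝ → ℝ)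

def mT : Set ℝ := {t | ENNReal.ofReal t < a}
def mS : Set ℝ := {s | 0 < s ∧ ENNReal.ofReal s < a}
def mE (s : ℝ) : Set ℝ := {t | s < t ∧ ENNReal.ofReal t < a}
noncomputable def mU (t : ℝ) : ℝ≥0∞ := ∫⁻ s in Ioo (0:ℝ) t, ENNReal.ofReal (u s)
noncomputable def mW (t : ℝ) : ℝ≥0∞ := ∫⁻ x in mE a t, ENNReal.ofReal ((v x)⁻¹)

lemma mT_meas : MeasurableSet (mT a) :=
  ENNReal.measurable_ofReal measurableSet_Iio

lemma mT_lower {s t : ℝ} (hst : s ≤ t) (ht : t ∈ mT a) : s ∈ mT a :=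
  lt_of_le_of_lt (ENNReal.ofReal_le_ofReal hst) ht

lemma mE_eq (s : ℝ) : mE a s = Ioi s ∩ mT a := by
  ext t; simp [mE, mT, mem_Ioi, and_comm]

lemma mS_eq : mS a = Ioi 0 ∩ mT a := by
  ext t; simp [mS, mT, mem_Ioi]

lemma mE_meas (s : ℝ) : MeasurableSet (mE a s) := by
  rw [mE_eq]; exact measurableSet_Ioi.inter (mT_meas a)

lemma mS_meas : MeasurableSet (mS a) := by
  rw [mS_eq]; exact measurableSet_Ioi.inter (mT_meas a)

lemma mE_subset_mT {s t : ℝ} (h : t ∈ mE a s) : t ∈ mT a := h.2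

lemma mE_anti {s s' : ℝ} (h : s ≤ s') : mE a s' ⊆ mE a s :=
  fun t ht => ⟨lt_of_le_of_lt h ht.1, ht.2⟩

lemma mU_mono : Monotone (mU u) := fun s t hst =>
  lintegral_mono_set (Ioo_subset_Ioo_right hst)

lemma mU_meas : Measurable (mU u) := (mU_mono u).measurable

lemma mW_anti : Antitone (mW a v) := fun s t hst =>
  lintegral_mono_set (mE_anti a hst)

lemma mW_meas : Measurable (mW a v) := (mW_anti a v).measurable

lemma mU_eq (t : ℝ) :
    mU u t = (volume.withDensity fun s => ENNReal.ofReal (u s)) (Ioo 0 t) :=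
  (withDensity_apply _ measurableSet_Ioo).symm

lemma mW_eq (t : ℝ) :
    mW a v t = (volume.withDensity fun x => ENNReal.ofReal ((v x)⁻¹)) (mE a t) :=
  (withDensity_apply _ (mE_meas a t)).symm

lemma mE_vol_pos (ha : 0 < a) {t : ℝ} (ht : t ∈ mT a) : 0 < volume (mE a t) := by
  rcases eq_or_ne a ∞ with rfl | hat
  · have hsub : Ioo t (t + 1) ⊆ mE ∞ t := by
      intro x hx
      exact ⟨hx.1, by simp⟩
    calc (0:ℝ≥0∞) < ENNReal.ofReal (t + 1 - t) := by simp
      _ = volume (Ioo t (t+1)) := (Real.volume_Ioo).symm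
      _ ≤ volume (mE ∞ t) := measure_mono hsub
  · set b := a.toReal with hb
    have hb0 : 0 < b := ENNReal.toReal_pos ha.ne' hat
    have htb : max t 0 < b := by
      rcases le_or_gt t 0 with h | h
      · exact lt_of_le_of_lt (max_le h le_rfl) hb0
      · rw [max_eq_left h.le]
        exact (ENNReal.ofReal_lt_iff_lt_toReal h.le hat).mp ht
    have hsub : Ioo (max t 0) b ⊆ mE a t := by
      intro x hx
      refine ⟨lt_of_le_of_lt (le_max_left t 0) hx.1, ?_⟩
      have hx0 : 0 < x := lt_of_le_of_lt (le_max_right t 0) hx.1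
      exact (ENNReal.ofReal_lt_iff_lt_toReal hx0.le hat).mpr hx.2
    calc (0:ℝ≥0∞) < ENNReal.ofReal (b - max t 0) := by
          simp [sub_pos.mpr htb]
      _ = volume (Ioo (max t 0) b) := (Real.volume_Ioo).symm
      _ ≤ volume (mE a t) := measure_mono hsub

lemma mW_pos (ha : 0 < a) (hv : Measurable v)
    (hv0 : ∀ s, 0 < s → ENNReal.ofReal s < a → 0 < v s)
    {t : ℝ} (ht0 : 0 < t) (ht : t ∈ mT a) : 0 < mW a v t := by
  have hmeas : Measurable fun x => ENNReal.ofReal ((v x)⁻¹) := hv.inv.ennreal_ofReal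
  rw [mW, lintegral_pos_iff_support hmeas,
    Measure.restrict_apply (measurableSet_support hmeas)]
  have hsub : mE a t ⊆ Function.support fun x => ENNReal.ofReal ((v x)⁻¹) := by
    intro x hx
    have hx0 : 0 < x := lt_trans ht0 hx.1
    have hvx := hv0 x hx0 hx.2
    exact (ENNReal.ofReal_pos.mpr (inv_pos.mpr hvx)).ne'
  rw [inter_eq_self_of_subset_right hsub]
  exact mE_vol_pos a ha ht

lemma coverU (hu : Measurable u) (x : ℝ≥0∞) :
    (volume.withDensity fun s => ENNReal.ofReal (u s)) {s | 0 < s ∧ mU u s < x} ≤ x := by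
  set μ := volume.withDensity fun s => ENNReal.ofReal (u s) with hμ
  set C : ℚ → Set ℝ := fun q =>
    if 0 < (q:ℝ) ∧ mU u q < x then Ioo (0:ℝ) q else ∅ with hC
  refine aux_cover μ _ x C ?_ ?_ ?_ ?_
  · intro q
    by_cases h : 0 < (q:ℝ) ∧ mU u q < x
    · rw [hC]; simp only [if_pos h]
      rw [← mU_eq]
      exact h.2.le
    · rw [hC]; simp only [if_neg h, measure_empty]; exact zero_le
  · intro q₁ q₂
    by_cases h1 : 0 < (q₁:ℝ) ∧ mU u q₁ < x
    · by_cases h2 : 0 < (q₂:ℝ) ∧ mU u q₂ < x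
      · refine ⟨max q₁ q₂, ?_, ?_⟩
        · have hcond : 0 < ((max q₁ q₂ : ℚ):ℝ) ∧ mU u (max q₁ q₂ : ℚ) < x := by
            constructor
            · push_cast
              exact lt_of_lt_of_le h1.1 (by push_cast; exact le_max_left _ _)
            · rcases max_choice q₁ q₂ with h | h <;> rw [h]
              · exact h1.2
              · exact h2.2
          rw [hC]; simp only [if_pos h1, if_pos hcond]
          exact Ioo_subset_Ioo_right (by push_cast; exact_mod_cast le_max_left q₁ q₂)
        · have hcond : 0 < ((max q₁ q₂ : ℚ):ℝ) ∧ mU u (max q₁ q₂ : ℚ) < x := by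
            constructor
            · exact lt_of_lt_of_le h1.1 (by exact_mod_cast le_max_left q₁ q₂)
            · rcases max_choice q₁ q₂ with h | h <;> rw [h]
              · exact h1.2
              · exact h2.2
          rw [hC]; simp only [if_pos h2, if_pos hcond]
          exact Ioo_subset_Ioo_right (by exact_mod_cast le_max_right q₁ q₂)
      · exact ⟨q₁, subset_rfl, by rw [hC]; simp only [if_neg h2]; exact empty_subset _⟩
    · exact ⟨q₂, by rw [hC]; simp only [if_neg h1]; exact empty_subset _, subset_rfl⟩
  · intro s t hs ht hst
    left
    obtain ⟨q, hq1, hq2⟩ := exists_rat_btwn hst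
    have hq0 : 0 < (q:ℝ) := lt_trans hs.1 hq1
    have hqx : mU u q < x := lt_of_le_of_lt (mU_mono u hq2.le) ht.2
    apply mem_iUnion_of_mem q
    rw [hC]
    dsimp only
    rw [if_pos ⟨hq0, hqx⟩]
    exact ⟨hs.1, hq1⟩
  · intro B hB
    exact (withDensity_absolutelyContinuous volume _) (hB.measure_zero volume)

lemma coverW (hv : Measurable v) (x : ℝ≥0∞) :
    (volume.withDensity fun t => ENNReal.ofReal ((v t)⁻¹))
      {t | t ∈ mT a ∧ mW a v t < x} ≤ x := by
  set μ := volume.withDensity fun t => ENNReal.ofReal ((v t)⁻¹) with hμ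
  set C : ℚ → Set ℝ := fun q => if mW a v q < x then mE a q else ∅ with hC
  refine aux_cover μ _ x C ?_ ?_ ?_ ?_
  · intro q
    by_cases h : mW a v q < x
    · rw [hC]; simp only [if_pos h]
      rw [← mW_eq]
      exact h.le
    · rw [hC]; simp only [if_neg h, measure_empty]; exact zero_le
  · intro q₁ q₂
    by_cases h1 : mW a v q₁ < x
    · by_cases h2 : mW a v q₂ < x
      · refine ⟨min q₁ q₂, ?_, ?_⟩
        · have hcond : mW a v (min q₁ q₂ : ℚ) < x := by
            rcases min_choice q₁ q₂ with h | h <;> rw [h]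
            · exact h1
            · exact h2
          rw [hC]; simp only [if_pos h1, if_pos hcond]
          exact mE_anti a (by exact_mod_cast min_le_left q₁ q₂)
        · have hcond : mW a v (min q₁ q₂ : ℚ) < x := by
            rcases min_choice q₁ q₂ with h | h <;> rw [h]
            · exact h1
            · exact h2
          rw [hC]; simp only [if_pos h2, if_pos hcond]
          exact mE_anti a (by exact_mod_cast min_le_right q₁ q₂)
      · exact ⟨q₁, subset_rfl, by rw [hC]; simp only [if_neg h2]; exact empty_subset _⟩
    · exact ⟨q₂, by rw [hC]; simp only [if_neg h1]; exact empty_subset _, subset_rfl⟩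
  · intro s t hs ht hst
    right
    obtain ⟨q, hq1, hq2⟩ := exists_rat_btwn hst
    have hqx : mW a v q < x := lt_of_le_of_lt (mW_anti a v hq1.le) hs.2
    apply mem_iUnion_of_mem q
    rw [hC]
    dsimp only
    rw [if_pos hqx]
    exact ⟨hq2, ht.1⟩
  · intro B hB
    exact (withDensity_absolutelyContinuous volume _) (hB.measure_zero volume)

lemma badNull (hu : Measurable u) :
    (volume.withDensity fun s => ENNReal.ofReal (u s)) {s | 0 < s ∧ mU u s = 0} = 0 := by
  have hle : ∀ x : ℝ≥0∞, 0 < x →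
      (volume.withDensity fun s => ENNReal.ofReal (u s)) {s | 0 < s ∧ mU u s = 0} ≤ x := by
    intro x hx
    refine le_trans (measure_mono ?_) (coverU u hu x)
    intro s hs
    exact ⟨hs.1, hs.2 ▸ hx⟩
  by_contra h0
  rcases eq_or_ne ((volume.withDensity fun s => ENNReal.ofReal (u s))
      {s | 0 < s ∧ mU u s = 0}) ∞ with he | he
  · have := hle 1 one_pos
    rw [he] at this
    exact absurd this (not_le.mpr ENNReal.one_lt_top)
  · have := hle _ (ENNReal.half_pos h0)
    exact absurd this (not_le.mpr (ENNReal.half_lt_self h0 he))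

lemma lemB (hu : Measurable u) (t : ℝ) :
    ∫⁻ s in Ioo (0:ℝ) t, ENNReal.ofReal (u s) * mU u s ^ (-(1/2:ℝ))
      ≤ 2 * mU u t ^ ((1/2:ℝ)) := by
  set ν := (volume.withDensity fun s => ENNReal.ofReal (u s)).restrict (Ioo (0:ℝ) t) with hν
  have hrm : Measurable fun s => mU u s ^ (-(1/2:ℝ)) := by
    have := mU_meas u
    fun_prop
  have heq : ∫⁻ s in Ioo (0:ℝ) t, ENNReal.ofReal (u s) * mU u s ^ (-(1/2:ℝ))
      = ∫⁻ s, mU u s ^ (-(1/2:ℝ)) ∂ν := by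
    rw [hν, restrict_withDensity measurableSet_Ioo,
      lintegral_withDensity_eq_lintegral_mul _ hu.ennreal_ofReal hrm]
    rfl
  rw [heq]
  refine aux_LC ν (mU u) (mU_meas u) (mU u t) ?_ ?_
  · intro x
    have hms : MeasurableSet {s : ℝ | mU u s < x} := (mU_meas u) measurableSet_Iio
    rw [hν, Measure.restrict_apply hms]
    refine le_trans (measure_mono ?_) (coverU u hu x)
    intro s hs
    exact ⟨hs.2.1, hs.1⟩
  · rw [hν, Measure.restrict_apply_univ, ← mU_eq]

lemma lemA (hv : Measurable v) (s : ℝ) :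
    ∫⁻ t in mE a s, ENNReal.ofReal ((v t)⁻¹) * mW a v t ^ (-(1/2:ℝ))
      ≤ 2 * mW a v s ^ ((1/2:ℝ)) := by
  set ν := (volume.withDensity fun t => ENNReal.ofReal ((v t)⁻¹)).restrict (mE a s) with hν
  have hrm : Measurable fun t => mW a v t ^ (-(1/2:ℝ)) := by
    have := mW_meas a v
    fun_prop
  have heq : ∫⁻ t in mE a s, ENNReal.ofReal ((v t)⁻¹) * mW a v t ^ (-(1/2:ℝ))
      = ∫⁻ t, mW a v t ^ (-(1/2:ℝ)) ∂ν := by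
    rw [hν, restrict_withDensity (mE_meas a s),
      lintegral_withDensity_eq_lintegral_mul _
        (show Measurable fun t => ENNReal.ofReal ((v t)⁻¹) from hv.inv.ennreal_ofReal) hrm]
    rfl
  rw [heq]
  refine aux_LC ν (mW a v) (mW_meas a v) (mW a v s) ?_ ?_
  · intro x
    have hms : MeasurableSet {t : ℝ | mW a v t < x} := (mW_meas a v) measurableSet_Iio
    rw [hν, Measure.restrict_apply hms]
    refine le_trans (measure_mono ?_) (coverW a v hv x)
    intro t ht
    exact ⟨ht.2.2, ht.1⟩
  · rw [hν, Measure.restrict_apply_univ, ← mW_eq]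

end MuckAux

open MeasureTheory Set
open scoped ENNReal

/-- dual Muckenhoupt sufficient condition, `p = 2`.
If `A₂ = sup_{0<t<a} (∫₀^t u)(∫_t^a v⁻¹)` is finite (i.e. `A₂` is an upper bound),
then for every measurable `f`,
`∫₀^a (∫_s^a f)² u(s) ds ≤ 4 A₂ ∫₀^a f(s)² v(s) ds`. -/
theorem muckenhoupt_dual_sufficient (a : ℝ≥0∞) (ha : 0 < a) (u v : ℝ → ℝ)
    (hu : Measurable u) (hv : Measurable v)
    (hu0 : ∀ s, 0 < s → ENNReal.ofReal s < a → 0 ≤ u s)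
    (hv0 : ∀ s, 0 < s → ENNReal.ofReal s < a → 0 < v s)
    (A₂ : ℝ)
    (hA₂ : ∀ t : ℝ, 0 < t → ENNReal.ofReal t < a →
      (∫⁻ s in Ioo (0 : ℝ) t, ENNReal.ofReal (u s)) *
        (∫⁻ s in {s : ℝ | t < s ∧ ENNReal.ofReal s < a}, ENNReal.ofReal ((v s)⁻¹))
        ≤ ENNReal.ofReal A₂) :
    ∀ f : ℝ → ℝ, Measurable f →
      ∫⁻ s in {s : ℝ | 0 < s ∧ ENNReal.ofReal s < a},
          ENNReal.ofReal
            (|∫ t in {t : ℝ | s < t ∧ ENNReal.ofReal t < a}, f t| ^ 2 * u s)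
        ≤ ENNReal.ofReal (4 * A₂) *
          ∫⁻ s in {s : ℝ | 0 < s ∧ ENNReal.ofReal s < a},
            ENNReal.ofReal (|f s| ^ 2 * v s) := by
  intro f hf
  have hgm : Measurable fun t => ENNReal.ofReal |f t| := hf.abs.ennreal_ofReal
  set g : ℝ → ℝ≥0∞ := fun t => ENNReal.ofReal |f t| with hgdef
  have hWm := mW_meas a v
  have hUm := mU_meas u
  have hA₂' : ∀ t : ℝ, t ∈ mS a → mU u t * mW a v t ≤ ENNReal.ofReal A₂ := fun t ht =>
    hA₂ t ht.1 ht.2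
  set Bad : Set ℝ := {s | 0 < s ∧ mU u s = 0} with hBaddef
  have hBadm : MeasurableSet Bad := by
    have : Bad = Ioi 0 ∩ mU u ⁻¹' {0} := by
      ext s; simp [hBaddef, mem_Ioi]
    rw [this]
    exact measurableSet_Ioi.inter (hUm (measurableSet_singleton 0))
  set Good : Set ℝ := mS a \ Bad with hGooddef
  have hGoodm : MeasurableSet Good := (mS_meas a).diff hBadm
  -- basic facts on Good
  have hGoodS : ∀ s ∈ Good, s ∈ mS a := fun s hs => hs.1
  have hGoodfacts : ∀ s ∈ Good, mU u s ≠ 0 ∧ mU u s ≠ ∞ ∧ 0 < mW a v s ∧ mW a v s ≠ ∞ := by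
    intro s hs
    have hsS : s ∈ mS a := hs.1
    have hU0 : mU u s ≠ 0 := fun h => hs.2 ⟨hsS.1, h⟩
    have hW0 : 0 < mW a v s := mW_pos a v ha hv hv0 hsS.1 hsS.2
    have hAs := hA₂' s hsS
    have hWfin : mW a v s ≠ ∞ := by
      intro h
      rw [h, ENNReal.mul_top hU0] at hAs
      exact absurd (lt_of_le_of_lt hAs ENNReal.ofReal_lt_top) (lt_irrefl _)
    have hUfin : mU u s ≠ ∞ := by
      intro h
      rw [h, ENNReal.top_mul hW0.ne'] at hAs
      exact absurd (lt_of_le_of_lt hAs ENNReal.ofReal_lt_top) (lt_irrefl _)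
    exact ⟨hU0, hUfin, hW0, hWfin⟩
  -- Step 0 : bound the Bochner integral by a lintegral
  have hstep0 : ∀ s : ℝ,
      ENNReal.ofReal (|∫ t in mE a s, f t| ^ 2 * u s)
        ≤ (∫⁻ t in mE a s, g t) ^ (2:ℝ) * ENNReal.ofReal (u s) := by
    intro s
    rw [ENNReal.ofReal_mul (by positivity)]
    refine mul_le_mul_left ?_ _
    have habs : ENNReal.ofReal |∫ t in mE a s, f t| ≤ ∫⁻ t in mE a s, g t := by
      rw [← Real.enorm_eq_ofReal_abs]
      refine le_trans (enorm_integral_le_lintegral_enorm _) ?_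
      refine le_of_eq (lintegral_congr fun t => ?_)
      exact Real.enorm_eq_ofReal_abs _
    calc ENNReal.ofReal (|∫ t in mE a s, f t| ^ 2)
        = ENNReal.ofReal |∫ t in mE a s, f t| ^ (2:ℕ) :=
          ENNReal.ofReal_pow (abs_nonneg _) 2
      _ = ENNReal.ofReal |∫ t in mE a s, f t| ^ ((2:ℕ):ℝ) :=
          (ENNReal.rpow_natCast _ 2).symm
      _ ≤ (∫⁻ t in mE a s, g t) ^ ((2:ℕ):ℝ) :=
          ENNReal.rpow_le_rpow habs (by norm_num)
      _ = (∫⁻ t in mE a s, g t) ^ (2:ℝ) := by norm_num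
  -- Step 1 : Cauchy-Schwarz and Lemma A
  have hCS : ∀ s ∈ Good,
      (∫⁻ t in mE a s, g t) ^ (2:ℝ)
        ≤ 2 * mW a v s ^ ((1/2:ℝ)) *
          ∫⁻ t in mE a s, g t ^ (2:ℝ) * ENNReal.ofReal (v t) * mW a v t ^ ((1/2:ℝ)) := by
    intro s hs
    have hs0 : 0 < s := hs.1.1
    obtain ⟨hU0, hUfin, hW0, hWfin⟩ := hGoodfacts s hs
    set m : ℝ → ℝ≥0∞ :=
      fun t => ENNReal.ofReal (v t) ^ ((1/2:ℝ)) * mW a v t ^ ((1/4:ℝ)) with hmdef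
    have hmm : Measurable m := by
      have h1 : Measurable fun t => ENNReal.ofReal (v t) := hv.ennreal_ofReal
      fun_prop
    have hfacts : ∀ t ∈ mE a s, m t ≠ 0 ∧ m t ≠ ∞ := by
      intro t ht
      have ht0 : 0 < t := lt_trans hs0 ht.1
      have hvt : 0 < v t := hv0 t ht0 ht.2
      have hWt0 : 0 < mW a v t := mW_pos a v ha hv hv0 ht0 ht.2
      have hWtfin : mW a v t ≠ ∞ :=
        (lt_of_le_of_lt (mW_anti a v ht.1.le) (lt_top_iff_ne_top.mpr hWfin)).ne
      constructor
      · exact mul_ne_zero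
          (ENNReal.rpow_pos (ENNReal.ofReal_pos.mpr hvt) ENNReal.ofReal_ne_top).ne'
          (ENNReal.rpow_pos hWt0 hWtfin).ne'
      · exact ENNReal.mul_ne_top
          (ENNReal.rpow_ne_top_of_nonneg (by norm_num) ENNReal.ofReal_ne_top)
          (ENNReal.rpow_ne_top_of_nonneg (by norm_num) hWtfin)
    have hsplit : ∫⁻ t in mE a s, g t
        = ∫⁻ t in mE a s, (g t * m t) * (m t)⁻¹ := by
      refine setLIntegral_congr_fun (mE_meas a s)
        (fun t ht => ?_)
      obtain ⟨h0, htop⟩ := hfacts t ht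
      rw [mul_assoc, ENNReal.mul_inv_cancel h0 htop, mul_one]
    have hH := ENNReal.lintegral_mul_le_Lp_mul_Lq (volume.restrict (mE a s))
      Real.HolderConjugate.two_two
      ((hgm.mul hmm).aemeasurable) ((hmm.inv).aemeasurable)
    have hIle : ∫⁻ t in mE a s, g t
        ≤ (∫⁻ t in mE a s, (g t * m t) ^ (2:ℝ)) ^ ((1:ℝ)/2) *
          (∫⁻ t in mE a s, ((m t)⁻¹) ^ (2:ℝ)) ^ ((1:ℝ)/2) := by
      rw [hsplit]
      exact hH
    have hsq : (∫⁻ t in mE a s, g t) ^ (2:ℝ)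
        ≤ (∫⁻ t in mE a s, (g t * m t) ^ (2:ℝ)) *
          (∫⁻ t in mE a s, ((m t)⁻¹) ^ (2:ℝ)) := by
      refine le_trans (ENNReal.rpow_le_rpow hIle (by norm_num : (0:ℝ) ≤ 2)) (le_of_eq ?_)
      rw [ENNReal.mul_rpow_of_nonneg _ _ (by norm_num : (0:ℝ) ≤ 2),
        ← ENNReal.rpow_mul, ← ENNReal.rpow_mul]
      norm_num
    have hpsi : ∫⁻ t in mE a s, ((m t)⁻¹) ^ (2:ℝ)
        = ∫⁻ t in mE a s, ENNReal.ofReal ((v t)⁻¹) * mW a v t ^ (-(1/2:ℝ)) := by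
      refine setLIntegral_congr_fun (mE_meas a s)
        (fun t ht => ?_)
      have ht0 : 0 < t := lt_trans hs0 ht.1
      have hvt : 0 < v t := hv0 t ht0 ht.2
      rw [hmdef]
      dsimp only
      rw [ENNReal.inv_rpow, ENNReal.mul_rpow_of_nonneg _ _ (by norm_num : (0:ℝ) ≤ 2),
        ← ENNReal.rpow_mul, ← ENNReal.rpow_mul,
        show (1/2:ℝ)*2 = 1 by norm_num, show (1/4:ℝ)*2 = 1/2 by norm_num,
        ENNReal.rpow_one,
        ENNReal.mul_inv (Or.inl (ENNReal.ofReal_pos.mpr hvt).ne')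
          (Or.inl ENNReal.ofReal_ne_top),
        ENNReal.ofReal_inv_of_pos hvt, ENNReal.rpow_neg]
    have hphi : ∫⁻ t in mE a s, (g t * m t) ^ (2:ℝ)
        = ∫⁻ t in mE a s, g t ^ (2:ℝ) * ENNReal.ofReal (v t) * mW a v t ^ ((1/2:ℝ)) := by
      refine setLIntegral_congr_fun (mE_meas a s)
        (fun t _ => ?_)
      rw [hmdef]
      dsimp only
      rw [ENNReal.mul_rpow_of_nonneg _ _ (by norm_num : (0:ℝ) ≤ 2),
        ENNReal.mul_rpow_of_nonneg _ _ (by norm_num : (0:ℝ) ≤ 2),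
        ← ENNReal.rpow_mul, ← ENNReal.rpow_mul,
        show (1/2:ℝ)*2 = 1 by norm_num, show (1/4:ℝ)*2 = 1/2 by norm_num,
        ENNReal.rpow_one, ← mul_assoc]
    rw [hphi, hpsi] at hsq
    refine le_trans hsq ?_
    calc (∫⁻ t in mE a s, g t ^ (2:ℝ) * ENNReal.ofReal (v t) * mW a v t ^ ((1/2:ℝ))) *
          (∫⁻ t in mE a s, ENNReal.ofReal ((v t)⁻¹) * mW a v t ^ (-(1/2:ℝ)))
        ≤ (∫⁻ t in mE a s, g t ^ (2:ℝ) * ENNReal.ofReal (v t) * mW a v t ^ ((1/2:ℝ))) *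
          (2 * mW a v s ^ ((1/2:ℝ))) := mul_le_mul_right (lemA a v hv s) _
      _ = 2 * mW a v s ^ ((1/2:ℝ)) *
          ∫⁻ t in mE a s, g t ^ (2:ℝ) * ENNReal.ofReal (v t) * mW a v t ^ ((1/2:ℝ)) :=
          mul_comm _ _
  -- continue main proof
  show ∫⁻ s in mS a, ENNReal.ofReal (|∫ t in mE a s, f t| ^ 2 * u s)
      ≤ ENNReal.ofReal (4 * A₂) * ∫⁻ s in mS a, ENNReal.ofReal (|f s| ^ 2 * v s)
  set F : ℝ → ℝ≥0∞ := fun s => ENNReal.ofReal (|∫ t in mE a s, f t| ^ 2 * u s) with hFdef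
  set k : ℝ → ℝ≥0∞ :=
    fun t => g t ^ (2:ℝ) * ENNReal.ofReal (v t) * mW a v t ^ ((1/2:ℝ)) with hkdef
  have hkm : Measurable k := by
    have h1 : Measurable fun t => ENNReal.ofReal (v t) := hv.ennreal_ofReal
    have h2 := hWm
    rw [hkdef]
    fun_prop
  set c₁ : ℝ → ℝ≥0∞ := fun s => ENNReal.ofReal (u s) * mW a v s ^ ((1/2:ℝ)) with hc₁def
  have hc₁m : Measurable c₁ := by
    have h1 : Measurable fun s => ENNReal.ofReal (u s) := hu.ennreal_ofReal
    have h2 := hWm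
    rw [hc₁def]
    fun_prop
  -- split the domain
  have hsplitS : ∫⁻ s in mS a, F s ≤ (∫⁻ s in mS a ∩ Bad, F s) + ∫⁻ s in Good, F s := by
    refine le_trans (lintegral_mono_set ?_) (lintegral_union_le _ _ _)
    intro s hs
    by_cases hB : s ∈ Bad
    · exact Or.inl ⟨hs, hB⟩
    · exact Or.inr ⟨hs, hB⟩
  -- the Bad part vanishes
  have hBadZero : ∫⁻ s in mS a ∩ Bad, F s = 0 := by
    have h1 : (volume.withDensity fun s => ENNReal.ofReal (u s)) (mS a ∩ Bad) = 0 :=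
      le_antisymm (le_trans (measure_mono inter_subset_right) (badNull u hu).le) zero_le
    rw [withDensity_apply _ ((mS_meas a).inter hBadm)] at h1
    have hae0 : ∀ᵐ s ∂(volume.restrict (mS a ∩ Bad)), ENNReal.ofReal (u s) = 0 :=
      (lintegral_eq_zero_iff hu.ennreal_ofReal).mp h1
    calc ∫⁻ s in mS a ∩ Bad, F s = ∫⁻ _ in mS a ∩ Bad, (0:ℝ≥0∞) := by
          refine lintegral_congr_ae ?_
          filter_upwards [hae0] with s hs0
          have hus : u s ≤ 0 := ENNReal.ofReal_eq_zero.mp hs0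
          rw [hFdef]
          dsimp only
          rw [ENNReal.ofReal_eq_zero]
          have habs : (0:ℝ) ≤ |∫ t in mE a s, f t| ^ 2 := by positivity
          exact mul_nonpos_iff.mpr (Or.inl ⟨habs, hus⟩)
      _ = 0 := lintegral_zero
  -- bound the Good part
  have hGoodle : ∫⁻ s in Good, F s
      ≤ 2 * ∫⁻ s in Good, c₁ s * ∫⁻ t in mE a s, k t := by
    have hmono : ∫⁻ s in Good, F s
        ≤ ∫⁻ s in Good, 2 * (c₁ s * ∫⁻ t in mE a s, k t) := by
      refine lintegral_mono_ae ?_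
      filter_upwards [ae_restrict_mem hGoodm] with s hs
      calc F s ≤ (∫⁻ t in mE a s, g t) ^ (2:ℝ) * ENNReal.ofReal (u s) := hstep0 s
        _ ≤ (2 * mW a v s ^ ((1/2:ℝ)) * ∫⁻ t in mE a s, k t) * ENNReal.ofReal (u s) :=
            mul_le_mul_left (hCS s hs) _
        _ = 2 * (c₁ s * ∫⁻ t in mE a s, k t) := by
            rw [hc₁def]; dsimp only; ring
    exact hmono.trans (le_of_eq (lintegral_const_mul' 2 _ (by norm_num)))
  -- Tonelli
  set D : Set (ℝ × ℝ) := {p : ℝ × ℝ | p.1 ∈ Good ∧ p.1 < p.2 ∧ p.2 ∈ mT a} with hDdef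
  have hDm : MeasurableSet D := by
    have h1 : MeasurableSet {p : ℝ × ℝ | p.1 ∈ Good} := measurable_fst hGoodm
    have h2 : MeasurableSet {p : ℝ × ℝ | p.1 < p.2} :=
      measurableSet_lt measurable_fst measurable_snd
    have h3 : MeasurableSet {p : ℝ × ℝ | p.2 ∈ mT a} := measurable_snd (mT_meas a)
    have hDeq : D = {p : ℝ × ℝ | p.1 ∈ Good} ∩ ({p : ℝ × ℝ | p.1 < p.2} ∩ {p : ℝ × ℝ | p.2 ∈ mT a}) := by
      ext p
      simp only [hDdef, mem_setOf_eq, mem_inter_iff]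
    rw [hDeq]
    exact h1.inter (h2.inter h3)
  set F2 : ℝ × ℝ → ℝ≥0∞ := D.indicator (fun p => c₁ p.1 * k p.2) with hF2def
  have hF2m : Measurable F2 :=
    ((hc₁m.comp measurable_fst).mul (hkm.comp measurable_snd)).indicator hDm
  have hrow : ∀ s : ℝ,
      (∫⁻ t, F2 (s, t)) = Good.indicator (fun s' => c₁ s' * ∫⁻ t in mE a s', k t) s := by
    intro s
    by_cases hsG : s ∈ Good
    · have hpt : ∀ t, F2 (s, t) = (mE a s).indicator (fun t => c₁ s * k t) t := by
        intro t
        by_cases htE : t ∈ mE a s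
        · rw [hF2def, indicator_of_mem htE,
            indicator_of_mem (show (s,t) ∈ D from ⟨hsG, htE.1, htE.2⟩)]
        · rw [hF2def, indicator_of_notMem htE,
            indicator_of_notMem (show (s,t) ∉ D from fun hd => htE ⟨hd.2.1, hd.2.2⟩)]
      rw [lintegral_congr hpt, lintegral_indicator (mE_meas a s),
        lintegral_const_mul _ hkm, indicator_of_mem hsG]
    · have hpt : ∀ t, F2 (s, t) = 0 := by
        intro t
        rw [hF2def, indicator_of_notMem (show (s,t) ∉ D from fun hd => hsG hd.1)]
      rw [lintegral_congr hpt, lintegral_zero, indicator_of_notMem hsG]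
  have hTon : ∫⁻ s in Good, c₁ s * ∫⁻ t in mE a s, k t = ∫⁻ t, (∫⁻ s, F2 (s, t)) := by
    rw [← lintegral_indicator hGoodm]
    rw [← lintegral_congr hrow]
    exact lintegral_lintegral_swap hF2m.aemeasurable
  -- pointwise bound of the inner integral in t
  have hAA : ENNReal.ofReal A₂ ^ ((1/2:ℝ)) * ENNReal.ofReal A₂ ^ ((1/2:ℝ))
      = ENNReal.ofReal A₂ := by
    rw [← ENNReal.rpow_add_of_nonneg _ _ (by norm_num) (by norm_num)]
    norm_num
  have hcol : ∀ t : ℝ, (∫⁻ s, F2 (s, t))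
      ≤ (mS a).indicator
          (fun t' => 2 * ENNReal.ofReal A₂ * (g t' ^ (2:ℝ) * ENNReal.ofReal (v t'))) t := by
    intro t
    by_cases htT : t ∈ mT a
    · have hpt : ∀ s, F2 (s, t) = (Good ∩ Iio t).indicator (fun s => c₁ s * k t) s := by
        intro s
        by_cases hsm : s ∈ Good ∩ Iio t
        · rw [hF2def, indicator_of_mem hsm,
            indicator_of_mem (show (s,t) ∈ D from ⟨hsm.1, hsm.2, htT⟩)]
        · rw [hF2def, indicator_of_notMem hsm,
            indicator_of_notMem (show (s,t) ∉ D from fun hd => hsm ⟨hd.1, hd.2.1⟩)]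
      rw [lintegral_congr hpt, lintegral_indicator (hGoodm.inter measurableSet_Iio),
        lintegral_mul_const _ hc₁m]
      by_cases hne : (Good ∩ Iio t).Nonempty
      · obtain ⟨s₀, hs₀⟩ := hne
        have ht0 : 0 < t := lt_trans hs₀.1.1.1 hs₀.2
        have htS : t ∈ mS a := ⟨ht0, htT⟩
        have hWt0 : 0 < mW a v t := mW_pos a v ha hv hv0 ht0 htT
        have hWtfin : mW a v t ≠ ∞ :=
          (lt_of_le_of_lt (mW_anti a v (le_of_lt hs₀.2))
            (lt_top_iff_ne_top.mpr (hGoodfacts s₀ hs₀.1).2.2.2)).ne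
        have hUt : mU u t ^ ((1/2:ℝ))
            ≤ ENNReal.ofReal A₂ ^ ((1/2:ℝ)) * mW a v t ^ (-(1/2:ℝ)) := by
          have h1 : mU u t ≤ ENNReal.ofReal A₂ / mW a v t :=
            (ENNReal.le_div_iff_mul_le (Or.inl hWt0.ne') (Or.inl hWtfin)).mpr (hA₂' t htS)
          calc mU u t ^ ((1/2:ℝ)) ≤ (ENNReal.ofReal A₂ / mW a v t) ^ ((1/2:ℝ)) :=
                ENNReal.rpow_le_rpow h1 (by norm_num)
            _ = ENNReal.ofReal A₂ ^ ((1/2:ℝ)) * mW a v t ^ (-(1/2:ℝ)) := by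
                rw [ENNReal.div_rpow_of_nonneg _ _ (by norm_num : (0:ℝ) ≤ 1/2),
                  div_eq_mul_inv, ENNReal.rpow_neg]
        have hJ : (∫⁻ s in Good ∩ Iio t, c₁ s)
            ≤ ENNReal.ofReal A₂ ^ ((1/2:ℝ)) * (2 * mU u t ^ ((1/2:ℝ))) := by
          have hp1 : ∫⁻ s in Good ∩ Iio t, c₁ s
              ≤ ∫⁻ s in Good ∩ Iio t,
                  ENNReal.ofReal A₂ ^ ((1/2:ℝ)) *
                    (ENNReal.ofReal (u s) * mU u s ^ (-(1/2:ℝ))) := by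
            refine lintegral_mono_ae ?_
            filter_upwards [ae_restrict_mem (hGoodm.inter measurableSet_Iio)] with s hsm
            obtain ⟨hU0, hUfin, hW0, hWfin⟩ := hGoodfacts s hsm.1
            have h1 : mW a v s ≤ ENNReal.ofReal A₂ / mU u s :=
              (ENNReal.le_div_iff_mul_le (Or.inl hU0) (Or.inl hUfin)).mpr
                (by rw [mul_comm]; exact hA₂' s hsm.1.1)
            have h2 : mW a v s ^ ((1/2:ℝ))
                ≤ ENNReal.ofReal A₂ ^ ((1/2:ℝ)) * mU u s ^ (-(1/2:ℝ)) := by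
              calc mW a v s ^ ((1/2:ℝ)) ≤ (ENNReal.ofReal A₂ / mU u s) ^ ((1/2:ℝ)) :=
                    ENNReal.rpow_le_rpow h1 (by norm_num)
                _ = _ := by
                    rw [ENNReal.div_rpow_of_nonneg _ _ (by norm_num : (0:ℝ) ≤ 1/2),
                      div_eq_mul_inv, ENNReal.rpow_neg]
            calc c₁ s = ENNReal.ofReal (u s) * mW a v s ^ ((1/2:ℝ)) := by rw [hc₁def]
              _ ≤ ENNReal.ofReal (u s) *
                  (ENNReal.ofReal A₂ ^ ((1/2:ℝ)) * mU u s ^ (-(1/2:ℝ))) :=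
                  mul_le_mul_right h2 _
              _ = ENNReal.ofReal A₂ ^ ((1/2:ℝ)) *
                  (ENNReal.ofReal (u s) * mU u s ^ (-(1/2:ℝ))) := by ring
          refine le_trans hp1 ?_
          rw [lintegral_const_mul' _ _
            (ENNReal.rpow_ne_top_of_nonneg (by norm_num) ENNReal.ofReal_ne_top)]
          refine mul_le_mul_right ?_ _
          refine le_trans (lintegral_mono_set
            (show Good ∩ Iio t ⊆ Ioo 0 t from fun s hsm => ⟨hsm.1.1.1, hsm.2⟩)) ?_
          exact lemB u hu t
        have hcancel : mW a v t ^ ((1/2:ℝ)) * mW a v t ^ (-(1/2:ℝ)) = 1 := by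
          rw [← ENNReal.rpow_add _ _ hWt0.ne' hWtfin]
          norm_num
        calc (∫⁻ s in Good ∩ Iio t, c₁ s) * k t
            ≤ (ENNReal.ofReal A₂ ^ ((1/2:ℝ)) * (2 * mU u t ^ ((1/2:ℝ)))) * k t :=
              mul_le_mul_left hJ _
          _ ≤ (ENNReal.ofReal A₂ ^ ((1/2:ℝ)) *
                (2 * (ENNReal.ofReal A₂ ^ ((1/2:ℝ)) * mW a v t ^ (-(1/2:ℝ))))) * k t := by
              gcongr
          _ = 2 * (ENNReal.ofReal A₂ ^ ((1/2:ℝ)) * ENNReal.ofReal A₂ ^ ((1/2:ℝ))) *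
                (g t ^ (2:ℝ) * ENNReal.ofReal (v t)) *
                (mW a v t ^ ((1/2:ℝ)) * mW a v t ^ (-(1/2:ℝ))) := by
              rw [hkdef]; dsimp only; ring
          _ = 2 * ENNReal.ofReal A₂ * (g t ^ (2:ℝ) * ENNReal.ofReal (v t)) := by
              rw [hAA, hcancel, mul_one]
          _ = (mS a).indicator
                (fun t' => 2 * ENNReal.ofReal A₂ * (g t' ^ (2:ℝ) * ENNReal.ofReal (v t'))) t :=
              by rw [indicator_of_mem htS]
      · rw [not_nonempty_iff_eq_empty] at hne
        rw [hne, Measure.restrict_empty, lintegral_zero_measure, zero_mul]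
        exact zero_le
    · have hpt : ∀ s, F2 (s, t) = 0 := by
        intro s
        rw [hF2def, indicator_of_notMem (show (s,t) ∉ D from fun hd => htT hd.2.2)]
      rw [lintegral_congr hpt, lintegral_zero]
      exact zero_le
  have hlast : ∫⁻ t, (∫⁻ s, F2 (s, t))
      ≤ 2 * ENNReal.ofReal A₂ * ∫⁻ t in mS a, g t ^ (2:ℝ) * ENNReal.ofReal (v t) := by
    refine le_trans (lintegral_mono hcol) (le_of_eq ?_)
    rw [lintegral_indicator (mS_meas a)]
    exact lintegral_const_mul' _ _
      (ENNReal.mul_ne_top (by norm_num) ENNReal.ofReal_ne_top)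
  have hRint : ∀ s : ℝ, g s ^ (2:ℝ) * ENNReal.ofReal (v s)
      = ENNReal.ofReal (|f s| ^ 2 * v s) := by
    intro s
    rw [ENNReal.ofReal_mul (by positivity), ENNReal.ofReal_pow (abs_nonneg _)]
    congr 1
    rw [hgdef]
    dsimp only
    rw [← ENNReal.rpow_natCast]
    norm_num
  calc ∫⁻ s in mS a, F s
      ≤ (∫⁻ s in mS a ∩ Bad, F s) + ∫⁻ s in Good, F s := hsplitS
    _ = ∫⁻ s in Good, F s := by rw [hBadZero, zero_add]
    _ ≤ 2 * ∫⁻ s in Good, c₁ s * ∫⁻ t in mE a s, k t := hGoodle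
    _ = 2 * ∫⁻ t, (∫⁻ s, F2 (s, t)) := by rw [hTon]
    _ ≤ 2 * (2 * ENNReal.ofReal A₂ * ∫⁻ t in mS a, g t ^ (2:ℝ) * ENNReal.ofReal (v t)) :=
        mul_le_mul_right hlast _
    _ = ENNReal.ofReal (4 * A₂) * ∫⁻ s in mS a, ENNReal.ofReal (|f s| ^ 2 * v s) := by
        rw [lintegral_congr hRint, ENNReal.ofReal_mul (by norm_num : (0:ℝ) ≤ 4),
          ENNReal.ofReal_ofNat]
        ring
end

section
/- Let N ≥ 5, let g : (0,∞) → [0,∞) be measurable with sup_{t>0} t^{4/N} g*(t) = M < ∞. Then there is a constant C = C(N) such that for all measurable f on (0,∞): ∫₀^∞ g*(s) (∫_s^∞ f(t) t^{-1+2/N} dt)² ds ≤ C M ∫₀^∞ f(s)² ds. -/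
open MeasureTheory Set
open scoped ENNReal

lemma lintIoi (a : ℝ) (ha : a < -1) {c : ℝ} (hc : 0 < c) :
    ∫⁻ t in Ioi c, ENNReal.ofReal (t ^ a) = ENNReal.ofReal (c ^ (a + 1) / (-(a + 1))) := by
  rw [← ofReal_integral_eq_lintegral_ofReal (integrableOn_Ioi_rpow_of_lt ha hc) ?_]
  · rw [integral_Ioi_rpow_of_lt ha hc, div_neg, neg_div]
  · filter_upwards [ae_restrict_mem measurableSet_Ioi] with t ht
    exact Real.rpow_nonneg (le_of_lt (hc.trans ht)) a

lemma lintIoo (a : ℝ) (ha : -1 < a) {c : ℝ} (hc : 0 < c) :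
    ∫⁻ s in Ioo 0 c, ENNReal.ofReal (s ^ a) = ENNReal.ofReal (c ^ (a + 1) / (a + 1)) := by
  have hint : IntegrableOn (fun s : ℝ => s ^ a) (Ioo 0 c) :=
    ((intervalIntegral.intervalIntegrable_rpow' ha (a := 0) (b := c)).1).mono_set
      Ioo_subset_Ioc_self
  rw [← ofReal_integral_eq_lintegral_ofReal hint ?_]
  · congr 1
    rw [← integral_Ioc_eq_integral_Ioo, ← intervalIntegral.integral_of_le hc.le,
      integral_rpow (Or.inl ha), Real.zero_rpow (by linarith : a + 1 ≠ 0), sub_zero]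
  · filter_upwards [ae_restrict_mem measurableSet_Ioo] with s hs
    exact Real.rpow_nonneg hs.1.le a

lemma ofReal_sq_eq (x : ℝ) : ENNReal.ofReal (x ^ 2) = (‖x‖₊ : ℝ≥0∞) ^ 2 := by
  rw [← enorm_eq_nnnorm, Real.enorm_eq_ofReal_abs, ← ENNReal.ofReal_pow (abs_nonneg _), sq_abs]

lemma rpow_half_sq (x : ℝ≥0∞) : (x ^ ((1:ℝ) / 2)) ^ (2:ℕ) = x := by
  rw [← ENNReal.rpow_natCast _ 2, ← ENNReal.rpow_mul]
  norm_num

lemma ennreal_rpow_two (x : ℝ≥0∞) : x ^ (2:ℝ) = x ^ (2:ℕ) := by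
  rw [← ENNReal.rpow_natCast]; norm_num

lemma cs_step {f : ℝ → ℝ} (hf : Measurable f) {β δ s : ℝ} (hs : 0 < s)
    (hδ : 0 < δ) (hβδ : 2 * β + δ = -1 - δ) :
    ENNReal.ofReal ((∫ t in Ioi s, f t * t ^ β) ^ 2)
      ≤ (∫⁻ t in Ioi s, (‖f t‖₊ : ℝ≥0∞) ^ 2 * ENNReal.ofReal (t ^ (-δ))) *
        ENNReal.ofReal (s ^ (-δ) / δ) := by
  rw [ofReal_sq_eq]
  have h1 : (‖∫ t in Ioi s, f t * t ^ β‖₊ : ℝ≥0∞) ^ 2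
      ≤ (∫⁻ t in Ioi s, (‖f t * t ^ β‖₊ : ℝ≥0∞)) ^ 2 := by
    rw [sq, sq]
    exact mul_le_mul' (enorm_integral_le_lintegral_enorm _)
      (enorm_integral_le_lintegral_enorm _)
  refine h1.trans ?_
  have h2 : ∫⁻ t in Ioi s, (‖f t * t ^ β‖₊ : ℝ≥0∞)
      = ∫⁻ t in Ioi s,
          ((‖f t‖₊ : ℝ≥0∞) * ENNReal.ofReal (t ^ (-δ / 2))) *
            ENNReal.ofReal (t ^ (β + δ / 2)) := by
    refine lintegral_congr_ae ?_
    filter_upwards [ae_restrict_mem measurableSet_Ioi] with t ht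
    have ht0 : (0:ℝ) < t := hs.trans ht
    rw [mul_assoc, ← ENNReal.ofReal_mul (Real.rpow_nonneg ht0.le _), ← Real.rpow_add ht0,
      show -δ / 2 + (β + δ / 2) = β by ring, ← enorm_eq_nnnorm, Real.enorm_eq_ofReal_abs, abs_mul,
      abs_of_nonneg (Real.rpow_nonneg ht0.le _), ENNReal.ofReal_mul (abs_nonneg _),
      ← Real.enorm_eq_ofReal_abs, enorm_eq_nnnorm]
  rw [h2]
  have hconj : Real.HolderConjugate 2 2 := Real.HolderConjugate.two_two
  have hmf : AEMeasurable (fun t : ℝ => (‖f t‖₊ : ℝ≥0∞) * ENNReal.ofReal (t ^ (-δ / 2)))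
      (volume.restrict (Ioi s)) :=
    (hf.enorm.mul ((measurable_id.pow measurable_const).ennreal_ofReal)).aemeasurable
  have hmg : AEMeasurable (fun t : ℝ => ENNReal.ofReal (t ^ (β + δ / 2)))
      (volume.restrict (Ioi s)) :=
    ((measurable_id.pow measurable_const).ennreal_ofReal).aemeasurable
  have h3 := ENNReal.lintegral_mul_le_Lp_mul_Lq (volume.restrict (Ioi s)) hconj hmf hmg
  have h4 : (∫⁻ t in Ioi s,
        ((‖f t‖₊ : ℝ≥0∞) * ENNReal.ofReal (t ^ (-δ / 2))) *
          ENNReal.ofReal (t ^ (β + δ / 2))) ^ (2:ℕ)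
      ≤ ((∫⁻ t in Ioi s,
          ((‖f t‖₊ : ℝ≥0∞) * ENNReal.ofReal (t ^ (-δ / 2))) ^ (2:ℝ)) ^ ((1:ℝ)/2) *
         (∫⁻ t in Ioi s, (ENNReal.ofReal (t ^ (β + δ / 2))) ^ (2:ℝ)) ^ ((1:ℝ)/2)) ^ (2:ℕ) := by
    gcongr
    exact h3
  refine h4.trans ?_
  rw [mul_pow, rpow_half_sq, rpow_half_sq]
  have e1 : ∫⁻ t in Ioi s, ((‖f t‖₊ : ℝ≥0∞) * ENNReal.ofReal (t ^ (-δ / 2))) ^ (2:ℝ)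
      = ∫⁻ t in Ioi s, (‖f t‖₊ : ℝ≥0∞) ^ 2 * ENNReal.ofReal (t ^ (-δ)) := by
    refine lintegral_congr_ae ?_
    filter_upwards [ae_restrict_mem measurableSet_Ioi] with t ht
    have ht0 : (0:ℝ) < t := hs.trans ht
    rw [ennreal_rpow_two, mul_pow,
      ← ENNReal.ofReal_pow (Real.rpow_nonneg ht0.le _), ← Real.rpow_natCast (t ^ (-δ / 2)) 2,
      ← Real.rpow_mul ht0.le]
    norm_num
  have e2 : ∫⁻ t in Ioi s, (ENNReal.ofReal (t ^ (β + δ / 2))) ^ (2:ℝ)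
      = ENNReal.ofReal (s ^ (-δ) / δ) := by
    have : ∫⁻ t in Ioi s, (ENNReal.ofReal (t ^ (β + δ / 2))) ^ (2:ℝ)
        = ∫⁻ t in Ioi s, ENNReal.ofReal (t ^ (-1 - δ)) := by
      refine lintegral_congr_ae ?_
      filter_upwards [ae_restrict_mem measurableSet_Ioi] with t ht
      have ht0 : (0:ℝ) < t := hs.trans ht
      rw [ennreal_rpow_two,
        ← ENNReal.ofReal_pow (Real.rpow_nonneg ht0.le _), ← Real.rpow_natCast (t ^ (β + δ / 2)) 2,
        ← Real.rpow_mul ht0.le]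
      congr 2
      push_cast
      linarith
    rw [this, lintIoi _ (by linarith) hs]
    congr 2 <;> ring
  rw [e1, e2]

lemma tonelli_step {H : ℝ → ℝ≥0∞} (hH : Measurable H) {δ : ℝ} (hδ : 0 < δ) :
    ∫⁻ s in Ioi (0:ℝ), ENNReal.ofReal (s ^ (δ - 1)) * ∫⁻ t in Ioi s, H t
      = ∫⁻ t in Ioi (0:ℝ), H t * ENNReal.ofReal (t ^ δ / δ) := by
  classical
  set K : ℝ → ℝ → ℝ≥0∞ :=
    fun s t => ENNReal.ofReal (s ^ (δ - 1)) * (if s < t then H t else 0) with hK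
  have hmeas : Measurable (Function.uncurry K) := by
    apply Measurable.mul
    · exact (measurable_fst.pow measurable_const).ennreal_ofReal
    · exact Measurable.ite (measurableSet_lt measurable_fst measurable_snd)
        (hH.comp measurable_snd) measurable_const
  have step1 : ∫⁻ s in Ioi (0:ℝ), ENNReal.ofReal (s ^ (δ - 1)) * ∫⁻ t in Ioi s, H t
      = ∫⁻ s in Ioi (0:ℝ), ∫⁻ t in Ioi (0:ℝ), K s t := by
    refine lintegral_congr_ae ?_
    filter_upwards [ae_restrict_mem measurableSet_Ioi] with s hs
    have hind : (fun t => if s < t then H t else 0) = (Ioi s).indicator H := by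
      ext t; simp [Set.indicator_apply, Set.mem_Ioi]
    rw [hK]
    simp only
    rw [lintegral_const_mul' _ _ ENNReal.ofReal_ne_top, hind,
      lintegral_indicator measurableSet_Ioi, Measure.restrict_restrict measurableSet_Ioi,
      Set.Ioi_inter_Ioi, max_eq_left (le_of_lt hs)]
  have step3 : ∫⁻ t in Ioi (0:ℝ), ∫⁻ s in Ioi (0:ℝ), K s t
      = ∫⁻ t in Ioi (0:ℝ), H t * ENNReal.ofReal (t ^ δ / δ) := by
    refine lintegral_congr_ae ?_
    filter_upwards [ae_restrict_mem measurableSet_Ioi] with t ht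
    have hind : (fun s => K s t) = (Iio t).indicator
        (fun s => ENNReal.ofReal (s ^ (δ - 1)) * H t) := by
      ext s
      by_cases h : s < t <;> simp [hK, Set.indicator_apply, Set.mem_Iio, h]
    rw [hind, lintegral_indicator measurableSet_Iio,
      Measure.restrict_restrict measurableSet_Iio, Set.Iio_inter_Ioi,
      lintegral_mul_const (H t) ((measurable_id'.pow measurable_const).ennreal_ofReal),
      lintIoo _ (by linarith) ht, sub_add_cancel, mul_comm]
  rw [step1, ← step3]
  exact lintegral_lintegral_swap hmeas.aemeasurable

/-- The one-dimensional decreasing rearrangement of `g` with respect to the measure `μ`: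
`g*(t) = inf { s > 0 : μ{|g| > s} < t }`. -/
noncomputable def decRearr {α : Type*} [MeasurableSpace α] (μ : Measure α)
    (g : α → ℝ) (t : ℝ) : ℝ :=
  sInf {s : ℝ | 0 < s ∧ μ {x | s < |g x|} < ENNReal.ofReal t}

/-- Let `N ≥ 5` and `g : (0,∞) → [0,∞)` measurable with
`sup_{t>0} t^(4/N) g*(t) ≤ M < ∞`.  Then there is `C = C(N)` such that for all
measurable `f`, `∫₀^∞ g*(s) (∫_s^∞ f(t) t^(-1+2/N) dt)² ds ≤ C M ∫₀^∞ f² ds`. -/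
theorem hardy_dual_weak_lorentz_weight (N : ℕ) (hN : 5 ≤ N) :
    ∃ C : ℝ, 0 < C ∧ ∀ (g : ℝ → ℝ) (M : ℝ), Measurable g → (∀ x ∈ Ioi (0 : ℝ), 0 ≤ g x) →
      (∀ t : ℝ, 0 < t →
        t ^ (4 / (N : ℝ)) * decRearr (volume.restrict (Ioi (0 : ℝ))) g t ≤ M) →
      ∀ f : ℝ → ℝ, Measurable f →
        ∫⁻ s in Ioi (0 : ℝ),
            ENNReal.ofReal (decRearr (volume.restrict (Ioi (0 : ℝ))) g s *
              (∫ t in Ioi s, f t * t ^ (-1 + 2 / (N : ℝ))) ^ 2)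
          ≤ ENNReal.ofReal (C * M) * ∫⁻ s in Ioi (0 : ℝ), ENNReal.ofReal (f s ^ 2) := by
  have hN5 : (5:ℝ) ≤ (N:ℝ) := by exact_mod_cast hN
  have hN0 : (0:ℝ) < N := by linarith
  set δ : ℝ := 1/2 - 2/(N:ℝ) with hδdef
  have h2N : 2/(N:ℝ) ≤ 2/5 := by
    rw [div_le_div_iff₀ hN0 (by norm_num)]; linarith
  have hδ : 0 < δ := by rw [hδdef]; linarith
  have hδi : (0:ℝ) ≤ δ⁻¹ := inv_nonneg.2 hδ.le
  refine ⟨δ⁻¹ ^ 2, pow_pos (inv_pos.2 hδ) 2, ?_⟩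
  intro g M hg hg0 hgM f hf
  set d : ℝ → ℝ := decRearr (volume.restrict (Ioi (0:ℝ))) g with hd
  have hd0 : ∀ s : ℝ, 0 ≤ d s := fun s => Real.sInf_nonneg fun x hx => hx.1.le
  have hM : 0 ≤ M := le_trans (hd0 1) (by simpa using hgM 1 one_pos)
  have hdb : ∀ s : ℝ, 0 < s → d s ≤ M * s ^ (-(4/(N:ℝ))) := by
    intro s hs
    have h1 := hgM s hs
    have h2 : 0 < s ^ (4/(N:ℝ)) := Real.rpow_pos_of_pos hs _
    rw [Real.rpow_neg hs.le, ← div_eq_mul_inv, le_div_iff₀ h2]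
    nlinarith [mul_comm (s ^ (4/(N:ℝ))) (d s)]
  set β : ℝ := -1 + 2/(N:ℝ) with hβdef
  have hβδ : 2*β + δ = -1 - δ := by rw [hβdef, hδdef]; ring
  set H : ℝ → ℝ≥0∞ := fun t => (‖f t‖₊ : ℝ≥0∞) ^ 2 * ENNReal.ofReal (t ^ (-δ)) with hH
  have hHm : Measurable H :=
    (hf.enorm.pow_const 2).mul ((measurable_id'.pow measurable_const).ennreal_ofReal)
  set A : ℝ → ℝ≥0∞ := fun s => ∫⁻ t in Ioi s, H t with hA
  have key : ∀ s : ℝ, s ∈ Ioi (0:ℝ) →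
      ENNReal.ofReal (d s * (∫ t in Ioi s, f t * t ^ β) ^ 2)
        ≤ (ENNReal.ofReal M * ENNReal.ofReal δ⁻¹) * (ENNReal.ofReal (s ^ (δ - 1)) * A s) := by
    intro s hs
    rw [Set.mem_Ioi] at hs
    have h1 : ENNReal.ofReal (d s * (∫ t in Ioi s, f t * t ^ β) ^ 2)
        ≤ ENNReal.ofReal M * ENNReal.ofReal (s ^ (-(4/(N:ℝ)))) *
          ENNReal.ofReal ((∫ t in Ioi s, f t * t ^ β) ^ 2) := by
      rw [← ENNReal.ofReal_mul hM, ← ENNReal.ofReal_mul (mul_nonneg hM (Real.rpow_nonneg hs.le _))]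
      exact ENNReal.ofReal_le_ofReal (mul_le_mul_of_nonneg_right (hdb s hs) (sq_nonneg _))
    refine h1.trans ?_
    have h2 := cs_step hf hs hδ hβδ
    calc ENNReal.ofReal M * ENNReal.ofReal (s ^ (-(4/(N:ℝ)))) *
          ENNReal.ofReal ((∫ t in Ioi s, f t * t ^ β) ^ 2)
        ≤ ENNReal.ofReal M * ENNReal.ofReal (s ^ (-(4/(N:ℝ)))) *
          (A s * ENNReal.ofReal (s ^ (-δ) / δ)) := mul_le_mul_right h2 _
      _ = (ENNReal.ofReal M * ENNReal.ofReal δ⁻¹) *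
          (ENNReal.ofReal (s ^ (δ - 1)) * A s) := by
          rw [div_eq_mul_inv (s ^ (-δ)) δ, ENNReal.ofReal_mul (Real.rpow_nonneg hs.le _),
            show ENNReal.ofReal (s ^ (δ - 1))
                = ENNReal.ofReal (s ^ (-(4/(N:ℝ)))) * ENNReal.ofReal (s ^ (-δ)) by
              rw [← ENNReal.ofReal_mul (Real.rpow_nonneg hs.le _), ← Real.rpow_add hs]
              congr 1
              rw [hδdef]; ring]
          ring
  calc ∫⁻ s in Ioi (0:ℝ), ENNReal.ofReal (d s * (∫ t in Ioi s, f t * t ^ β) ^ 2)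
      ≤ ∫⁻ s in Ioi (0:ℝ),
          (ENNReal.ofReal M * ENNReal.ofReal δ⁻¹) * (ENNReal.ofReal (s ^ (δ - 1)) * A s) :=
        lintegral_mono_ae
          (by filter_upwards [ae_restrict_mem measurableSet_Ioi] with s hs using key s hs)
    _ = (ENNReal.ofReal M * ENNReal.ofReal δ⁻¹) *
        ∫⁻ s in Ioi (0:ℝ), ENNReal.ofReal (s ^ (δ - 1)) * A s :=
        lintegral_const_mul' _ _ (ENNReal.mul_ne_top ENNReal.ofReal_ne_top ENNReal.ofReal_ne_top)
    _ = (ENNReal.ofReal M * ENNReal.ofReal δ⁻¹) *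
        ∫⁻ t in Ioi (0:ℝ), H t * ENNReal.ofReal (t ^ δ / δ) := by
        rw [hA]; rw [tonelli_step hHm hδ]
    _ = (ENNReal.ofReal M * ENNReal.ofReal δ⁻¹) *
        ∫⁻ t in Ioi (0:ℝ), ENNReal.ofReal δ⁻¹ * ENNReal.ofReal (f t ^ 2) := by
        congr 1
        refine lintegral_congr_ae ?_
        filter_upwards [ae_restrict_mem measurableSet_Ioi] with t ht
        rw [Set.mem_Ioi] at ht
        have h5 : ENNReal.ofReal (t ^ (-δ)) * ENNReal.ofReal (t ^ δ) = 1 := by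
          rw [← ENNReal.ofReal_mul (Real.rpow_nonneg ht.le _), ← Real.rpow_add ht,
            neg_add_cancel, Real.rpow_zero, ENNReal.ofReal_one]
        rw [hH]
        simp only
        rw [div_eq_mul_inv (t ^ δ) δ, ENNReal.ofReal_mul (Real.rpow_nonneg ht.le _)]
        calc (‖f t‖₊ : ℝ≥0∞) ^ 2 * ENNReal.ofReal (t ^ (-δ)) *
              (ENNReal.ofReal (t ^ δ) * ENNReal.ofReal δ⁻¹)
            = (ENNReal.ofReal (t ^ (-δ)) * ENNReal.ofReal (t ^ δ)) *
              (ENNReal.ofReal δ⁻¹ * (‖f t‖₊ : ℝ≥0∞) ^ 2) := by ring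
          _ = ENNReal.ofReal δ⁻¹ * ENNReal.ofReal (f t ^ 2) := by
              rw [h5, one_mul, ofReal_sq_eq]
    _ = (ENNReal.ofReal M * ENNReal.ofReal δ⁻¹) *
        (ENNReal.ofReal δ⁻¹ * ∫⁻ t in Ioi (0:ℝ), ENNReal.ofReal (f t ^ 2)) := by
        rw [lintegral_const_mul' _ _ ENNReal.ofReal_ne_top]
    _ = ENNReal.ofReal (δ⁻¹ ^ 2 * M) * ∫⁻ s in Ioi (0:ℝ), ENNReal.ofReal (f s ^ 2) := by
        rw [sq δ⁻¹, ENNReal.ofReal_mul (mul_nonneg hδi hδi), ENNReal.ofReal_mul hδi]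
        ring
end

section
/- Let N ≥ 5, R ∈ (0,∞], and let g : B(0,R) → [0,∞) be radial and radially decreasing. Suppose there is C > 0 such that ∫ g u² ≤ C ∫ |Δu|² for the family of test functions u_r(x) = (r-|x|)² 1_{|x|≤r}, r ∈ (0,R). Then sup_{0<t<|B(0,R)|} t^{4/N} g**(t) < ∞, i.e., g ∈ L^{N/4,∞}(B(0,R)). -/
open MeasureTheory Set
open scoped ENNReal

/-- The (pointwise) Laplacian `Δu(x) = ∑ i ∂²u/∂x_i²(x)`. -/
noncomputable def lap {N : ℕ} (u : EuclideanSpace ℝ (Fin N) → ℝ)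
    (x : EuclideanSpace ℝ (Fin N)) : ℝ :=
  ∑ i : Fin N, iteratedFDeriv ℝ 2 u x ![EuclideanSpace.single i 1, EuclideanSpace.single i 1]

section Helpers

open Metric

variable {E : Type*} [NormedAddCommGroup E] [InnerProductSpace ℝ E]

lemma hasFDerivAt_norm_of_ne {x : E} (hx : x ≠ 0) :
    HasFDerivAt (fun y : E => ‖y‖) (‖x‖⁻¹ • innerSL ℝ x) x := by
  have hsq : HasFDerivAt (fun y : E => ‖y‖ ^ 2) (2 • innerSL ℝ x) x :=
    (hasStrictFDerivAt_norm_sq x).hasFDerivAt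
  have hn : (0:ℝ) < ‖x‖ := norm_pos_iff.mpr hx
  have hsqrt : HasDerivAt Real.sqrt (1 / (2 * Real.sqrt (‖x‖ ^ 2))) (‖x‖ ^ 2) :=
    Real.hasDerivAt_sqrt (by positivity)
  have := hsqrt.comp_hasFDerivAt x hsq
  have heq : (fun y : E => Real.sqrt (‖y‖ ^ 2)) = fun y : E => ‖y‖ := by
    ext y; rw [Real.sqrt_sq (norm_nonneg y)]
  rw [show Real.sqrt ∘ (fun y : E => ‖y‖ ^ 2) = fun y : E => ‖y‖ from funext fun y => Real.sqrt_sq (norm_nonneg y)] at this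
  refine this.congr_fderiv (Eq.symm ?_)
  rw [Real.sqrt_sq (norm_nonneg x)]
  ext v
  simp only [ContinuousLinearMap.coe_smul', Pi.smul_apply, smul_eq_mul,
    ContinuousLinearMap.smul_apply, nsmul_eq_mul, Nat.cast_ofNat]
  field_simp

lemma hasFDerivAt_phi (r : ℝ) {x : E} (hx : x ≠ 0) :
    HasFDerivAt (fun y : E => (r - ‖y‖) ^ 2)
      ((2 - 2 * r * ‖x‖⁻¹) • innerSL ℝ x) x := by
  have hn : (0:ℝ) < ‖x‖ := norm_pos_iff.mpr hx
  have h1 : HasDerivAt (fun t : ℝ => (r - t) ^ 2) (2 * (r - ‖x‖) * (-1)) ‖x‖ := by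
    have := ((hasDerivAt_id (‖x‖)).const_sub r).pow 2
    simpa [Pi.pow_def] using this
  have := h1.comp_hasFDerivAt x (hasFDerivAt_norm_of_ne hx)
  refine this.congr_fderiv (Eq.symm ?_)
  ext v
  simp only [ContinuousLinearMap.coe_smul', Pi.smul_apply, smul_eq_mul]
  field_simp
  ring


noncomputable def innerCLM (E : Type*) [NormedAddCommGroup E] [InnerProductSpace ℝ E] :
    E →L[ℝ] E →L[ℝ] ℝ := innerSL ℝ

@[simp] lemma innerCLM_apply (x y : E) : innerCLM E x y = inner ℝ x y := rfl

lemma hasFDerivAt_c (r : ℝ) {x : E} (hx : x ≠ 0) :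
    HasFDerivAt (fun y : E => 2 - 2 * r * ‖y‖⁻¹)
      ((2 * r * (‖x‖ ^ 3)⁻¹) • innerCLM E x) x := by
  have hn : (0:ℝ) < ‖x‖ := norm_pos_iff.mpr hx
  have h1 : HasDerivAt (fun t : ℝ => 2 - 2 * r * t⁻¹) (2 * r * (‖x‖ ^ 2)⁻¹) ‖x‖ := by
    have := ((hasDerivAt_inv hn.ne').const_mul (2 * r)).const_sub 2
    refine this.congr_deriv ?_
    field_simp
  have h2 := h1.comp_hasFDerivAt x (hasFDerivAt_norm_of_ne hx)
  have key : ((2 * r * (‖x‖ ^ 3)⁻¹) • innerCLM E x : E →L[ℝ] ℝ)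
      = (2 * r * (‖x‖ ^ 2)⁻¹) • ‖x‖⁻¹ • innerSL ℝ x := by
    rw [smul_smul]
    congr 1
    rw [pow_succ, mul_inv]
    ring
  rw [key]
  exact h2

lemma hasFDerivAt_B (r : ℝ) {x : E} (hx : x ≠ 0) :
    HasFDerivAt (fun y : E => (2 - 2 * r * ‖y‖⁻¹) • innerCLM E y)
      ((2 - 2 * r * ‖x‖⁻¹) • innerCLM E
        + ((2 * r * (‖x‖ ^ 3)⁻¹) • innerCLM E x).smulRight (innerCLM E x)) x :=
  (hasFDerivAt_c r hx).smul (innerCLM E).hasFDerivAt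

lemma lap_eq {N : ℕ} (r : ℝ) (x : EuclideanSpace ℝ (Fin N)) (hx : x ≠ 0) (hxr : ‖x‖ < r) :
    lap (fun y => if ‖y‖ ≤ r then (r - ‖y‖) ^ 2 else 0) x
      = 2 * N - 2 * r * (N - 1) / ‖x‖ := by
  have hn : (0:ℝ) < ‖x‖ := norm_pos_iff.mpr hx
  set v : EuclideanSpace ℝ (Fin N) → ℝ := fun y => if ‖y‖ ≤ r then (r - ‖y‖) ^ 2 else 0 with hv
  have hev : v =ᶠ[nhds x] (fun y => (r - ‖y‖) ^ 2) := by
    have ho : IsOpen {y : EuclideanSpace ℝ (Fin N) | ‖y‖ < r} :=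
      isOpen_lt continuous_norm continuous_const
    filter_upwards [ho.mem_nhds (by exact hxr)] with y hy
    simp only [v, if_pos (le_of_lt hy)]
  have hev2 : fderiv ℝ (fun y : EuclideanSpace ℝ (Fin N) => (r - ‖y‖) ^ 2) =ᶠ[nhds x]
      (fun y => (2 - 2 * r * ‖y‖⁻¹) • innerCLM _ y) := by
    filter_upwards [isOpen_ne.mem_nhds (by exact hx)] with y hy
    exact (hasFDerivAt_phi r hy).fderiv
  have hD : fderiv ℝ (fderiv ℝ v) x
      = (2 - 2 * r * ‖x‖⁻¹) • innerCLM (EuclideanSpace ℝ (Fin N))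
        + ((2 * r * (‖x‖ ^ 3)⁻¹) • innerCLM _ x).smulRight (innerCLM _ x) := by
    rw [((hev.fderiv).trans hev2).fderiv_eq]
    exact (hasFDerivAt_B r hx).fderiv
  have hterm : ∀ i : Fin N,
      iteratedFDeriv ℝ 2 v x ![EuclideanSpace.single i 1, EuclideanSpace.single i 1]
        = (2 - 2 * r * ‖x‖⁻¹) + 2 * r * (‖x‖ ^ 3)⁻¹ * (x i * x i) := by
    intro i
    rw [iteratedFDeriv_two_apply, hD]
    have h1 : (inner ℝ (EuclideanSpace.single i (1:ℝ)) (EuclideanSpace.single i (1:ℝ)) : ℝ) = 1 := by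
      simp [EuclideanSpace.inner_single_right, EuclideanSpace.single_apply]
    have h2 : (inner ℝ x (EuclideanSpace.single i (1:ℝ)) : ℝ) = x i := by
      simp [EuclideanSpace.inner_single_right]
    have h2' : ((innerSL ℝ) x) (EuclideanSpace.single i (1:ℝ)) = x i := h2
    have h1' : ((innerSL ℝ) (EuclideanSpace.single i (1:ℝ))) (EuclideanSpace.single i (1:ℝ)) = 1 := h1
    simp [innerCLM, ContinuousLinearMap.smulRight_apply, innerSL_apply_apply, h1, h2, h2', h1']
    ring
  have hsum : ∑ i : Fin N, x i * x i = ‖x‖ ^ 2 := by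
    rw [← real_inner_self_eq_norm_sq]
    simp only [PiLp.inner_apply, RCLike.inner_apply, conj_trivial]
  simp only [lap, hterm]
  rw [Finset.sum_add_distrib, Finset.sum_const, ← Finset.mul_sum, hsum]
  simp only [Finset.card_univ, Fintype.card_fin, nsmul_eq_mul]
  field_simp
  ring

lemma J_bound {N : ℕ} (hN : 5 ≤ N) {r : ℝ} (hr : 0 < r) :
    ∫⁻ x in closedBall (0 : EuclideanSpace ℝ (Fin N)) r, ENNReal.ofReal ((‖x‖ ^ 2)⁻¹)
      ≤ 2 * ENNReal.ofReal (r ^ (N - 2)) * volume (ball (0 : EuclideanSpace ℝ (Fin N)) 1) := by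
  set K1 := volume (ball (0 : EuclideanSpace ℝ (Fin N)) 1) with hK1
  have hfr : Module.finrank ℝ (EuclideanSpace ℝ (Fin N)) = N := finrank_euclideanSpace_fin
  set μ' := volume.restrict (closedBall (0 : EuclideanSpace ℝ (Fin N)) r) with hμ'
  have hmeas : Measurable fun x : EuclideanSpace ℝ (Fin N) => (‖x‖ ^ 2)⁻¹ :=
    (measurable_norm.pow_const 2).inv
  have hlayer : ∫⁻ x, ENNReal.ofReal ((‖x‖ ^ 2)⁻¹) ∂μ'
      = ∫⁻ t in Ioi (0:ℝ), μ' {a | t ≤ (‖a‖ ^ 2)⁻¹} :=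
    lintegral_eq_lintegral_meas_le μ'
      (Filter.Eventually.of_forall fun x => by positivity) hmeas.aemeasurable
  set a₀ : ℝ := (r ^ 2)⁻¹ with ha₀
  have ha₀pos : 0 < a₀ := by positivity
  have hsplit : ∫⁻ t in Ioi (0:ℝ), μ' {a | t ≤ (‖a‖ ^ 2)⁻¹}
      ≤ (∫⁻ t in Ioc (0:ℝ) a₀, μ' {a | t ≤ (‖a‖ ^ 2)⁻¹})
        + ∫⁻ t in Ioi a₀, μ' {a | t ≤ (‖a‖ ^ 2)⁻¹} :=
    le_trans (lintegral_mono_set Ioi_subset_Ioc_union_Ioi) (lintegral_union_le _ _ _)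
  have hcb : volume (closedBall (0 : EuclideanSpace ℝ (Fin N)) r)
      = ENNReal.ofReal (r ^ N) * K1 := by
    rw [Measure.addHaar_closedBall _ _ hr.le, hfr]
  have hNr : (5:ℝ) ≤ (N:ℝ) := by exact_mod_cast hN
  -- piece 1
  have hp1 : (∫⁻ t in Ioc (0:ℝ) a₀, μ' {a | t ≤ (‖a‖ ^ 2)⁻¹})
      ≤ ENNReal.ofReal (r ^ (N-2)) * K1 := by
    have hb : ∀ t : ℝ, μ' {a | t ≤ (‖a‖ ^ 2)⁻¹} ≤ ENNReal.ofReal (r ^ N) * K1 := by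
      intro t
      refine le_trans (measure_mono (subset_univ _)) ?_
      rw [hμ', Measure.restrict_apply_univ, hcb]
    calc (∫⁻ t in Ioc (0:ℝ) a₀, μ' {a | t ≤ (‖a‖ ^ 2)⁻¹})
        ≤ ∫⁻ _ in Ioc (0:ℝ) a₀, ENNReal.ofReal (r ^ N) * K1 :=
          lintegral_mono fun t => hb t
      _ = ENNReal.ofReal (r ^ N) * K1 * ENNReal.ofReal a₀ := by
          rw [setLIntegral_const, Real.volume_Ioc, sub_zero]
      _ = ENNReal.ofReal (r ^ (N-2)) * K1 := by
          rw [mul_right_comm, ← ENNReal.ofReal_mul (by positivity)]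
          congr 2
          have : r ^ N = r ^ (N - 2) * r ^ 2 := by
            rw [← pow_add]; congr 1; omega
          rw [this, ha₀]
          field_simp
  -- piece 2
  have hKfin : K1 ≠ ⊤ := measure_ball_lt_top.ne
  set p : ℝ := -(N:ℝ)/2 with hp
  have hplt : p < -1 := by rw [hp]; linarith
  have hp2 : (∫⁻ t in Ioi a₀, μ' {a | t ≤ (‖a‖ ^ 2)⁻¹})
      ≤ ENNReal.ofReal (r ^ (N-2)) * K1 := by
    have hsub : ∀ t ∈ Ioi a₀, μ' {a | t ≤ (‖a‖ ^ 2)⁻¹}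
        ≤ ENNReal.ofReal (t ^ p) * K1 := by
      intro t ht
      have htpos : (0:ℝ) < t := lt_trans ha₀pos ht
      have hss : {a : EuclideanSpace ℝ (Fin N) | t ≤ (‖a‖ ^ 2)⁻¹}
          ⊆ closedBall 0 (Real.sqrt t⁻¹) := by
        intro a ha
        simp only [mem_setOf_eq] at ha
        rw [mem_closedBall_zero_iff,
          show ‖a‖ = Real.sqrt (‖a‖^2) from (Real.sqrt_sq (norm_nonneg a)).symm]
        apply Real.sqrt_le_sqrt
        rcases eq_or_lt_of_le (sq_nonneg ‖a‖) with h0 | h0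
        · rw [← h0]; positivity
        · exact (le_inv_comm₀ htpos h0).mp ha
      have h1 : μ' {a | t ≤ (‖a‖ ^ 2)⁻¹}
          ≤ volume (closedBall (0 : EuclideanSpace ℝ (Fin N)) (Real.sqrt t⁻¹)) := by
        rw [hμ', Measure.restrict_apply' measurableSet_closedBall]
        exact measure_mono (inter_subset_left.trans hss)
      have h2 : volume (closedBall (0 : EuclideanSpace ℝ (Fin N)) (Real.sqrt t⁻¹))
          = ENNReal.ofReal (t ^ p) * K1 := by
        rw [Measure.addHaar_closedBall _ _ (Real.sqrt_nonneg _), hfr]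
        congr 2
        rw [Real.sqrt_eq_rpow, ← Real.rpow_natCast (t⁻¹ ^ ((1:ℝ)/2)) N,
          ← Real.rpow_neg_one t, ← Real.rpow_mul htpos.le, ← Real.rpow_mul htpos.le]
        congr 1
        push_cast
        ring
      exact h1.trans_eq h2
    have hmeas2 : Measurable fun t : ℝ => ENNReal.ofReal (t ^ p) :=
      by measurability
    calc (∫⁻ t in Ioi a₀, μ' {a | t ≤ (‖a‖ ^ 2)⁻¹})
        ≤ ∫⁻ t in Ioi a₀, ENNReal.ofReal (t ^ p) * K1 :=
          setLIntegral_mono' measurableSet_Ioi hsub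
      _ = (∫⁻ t in Ioi a₀, ENNReal.ofReal (t ^ p)) * K1 :=
          lintegral_mul_const _ hmeas2
      _ = ENNReal.ofReal (∫ t in Ioi a₀, t ^ p) * K1 := by
          rw [ofReal_integral_eq_lintegral_ofReal
            (integrableOn_Ioi_rpow_of_lt hplt ha₀pos)
            ((ae_restrict_mem measurableSet_Ioi).mono fun t ht =>
              Real.rpow_nonneg (le_of_lt (lt_trans ha₀pos ht)) p)]
      _ ≤ ENNReal.ofReal (r ^ (N-2)) * K1 := by
          gcongr
          rw [integral_Ioi_rpow_of_lt hplt ha₀pos]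
          have hNe : (N:ℝ) - 2 ≠ 0 := by linarith
          have ha' : a₀ ^ (p + 1) = r ^ ((N:ℝ) - 2) := by
            rw [ha₀, ← Real.rpow_natCast r 2, ← Real.rpow_neg_one (r ^ ((2:ℕ):ℝ)),
              ← Real.rpow_mul hr.le, ← Real.rpow_mul hr.le]
            congr 1
            push_cast
            rw [hp]
            ring
          rw [ha']
          have hrn : r ^ ((N:ℝ) - 2) = r ^ (N - 2) := by
            rw [← Real.rpow_natCast r (N-2)]
            congr 1
            push_cast [Nat.cast_sub (by omega : 2 ≤ N)]
            ring
          rw [← hrn]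
          have hx : 0 ≤ r ^ ((N:ℝ) - 2) := Real.rpow_nonneg hr.le _
          have hd : p + 1 < 0 := by linarith
          rw [div_le_iff_of_neg hd]
          nlinarith [hx]
  calc ∫⁻ x in closedBall (0 : EuclideanSpace ℝ (Fin N)) r, ENNReal.ofReal ((‖x‖ ^ 2)⁻¹)
      = ∫⁻ x, ENNReal.ofReal ((‖x‖ ^ 2)⁻¹) ∂μ' := rfl
    _ = ∫⁻ t in Ioi (0:ℝ), μ' {a | t ≤ (‖a‖ ^ 2)⁻¹} := hlayer
    _ ≤ (∫⁻ t in Ioc (0:ℝ) a₀, μ' {a | t ≤ (‖a‖ ^ 2)⁻¹})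
        + ∫⁻ t in Ioi a₀, μ' {a | t ≤ (‖a‖ ^ 2)⁻¹} := hsplit
    _ ≤ ENNReal.ofReal (r ^ (N-2)) * K1 + ENNReal.ofReal (r ^ (N-2)) * K1 := add_le_add hp1 hp2
    _ = 2 * ENNReal.ofReal (r ^ (N-2)) * K1 := by ring

lemma lap_zero {N : ℕ} (r : ℝ) (x : EuclideanSpace ℝ (Fin N)) (hxr : r < ‖x‖) :
    lap (fun y => if ‖y‖ ≤ r then (r - ‖y‖) ^ 2 else 0) x = 0 := by
  set v : EuclideanSpace ℝ (Fin N) → ℝ := fun y => if ‖y‖ ≤ r then (r - ‖y‖) ^ 2 else 0 with hv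
  have hev : v =ᶠ[nhds x] (fun _ => (0:ℝ)) := by
    have ho : IsOpen {y : EuclideanSpace ℝ (Fin N) | r < ‖y‖} :=
      isOpen_lt continuous_const continuous_norm
    filter_upwards [ho.mem_nhds (by exact hxr)] with y hy
    simp only [v, if_neg (not_le.mpr hy)]
  have e1 : fderiv ℝ v =ᶠ[nhds x] (fun _ => (0 : EuclideanSpace ℝ (Fin N) →L[ℝ] ℝ)) :=
    hev.fderiv.trans (Filter.EventuallyEq.of_eq (funext fun y => fderiv_const_apply 0))
  have h2 : fderiv ℝ (fderiv ℝ v) x = 0 := by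
    rw [e1.fderiv_eq]; exact fderiv_const_apply _
  simp [lap, iteratedFDeriv_two_apply, h2]

lemma rhs_bound {N : ℕ} (hN : 5 ≤ N) {r : ℝ} (hr : 0 < r)
    (Ω : Set (EuclideanSpace ℝ (Fin N))) :
    ∫⁻ x in Ω, ENNReal.ofReal
        ((lap (fun y => if ‖y‖ ≤ r then (r - ‖y‖) ^ 2 else 0) x) ^ 2)
      ≤ ENNReal.ofReal (r ^ N) * (ENNReal.ofReal (8*(N:ℝ)^2 + 16*((N:ℝ)-1)^2)
          * volume (ball (0 : EuclideanSpace ℝ (Fin N)) 1)) := by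
  haveI : Nonempty (Fin N) := ⟨⟨0, by omega⟩⟩
  set K1 := volume (ball (0 : EuclideanSpace ℝ (Fin N)) 1) with hK1
  have hfr : Module.finrank ℝ (EuclideanSpace ℝ (Fin N)) = N := finrank_euclideanSpace_fin
  set v : EuclideanSpace ℝ (Fin N) → ℝ := fun y => if ‖y‖ ≤ r then (r - ‖y‖) ^ 2 else 0 with hv
  set G : EuclideanSpace ℝ (Fin N) → ℝ≥0∞ :=
    (closedBall (0 : EuclideanSpace ℝ (Fin N)) r).indicator
      (fun x => ENNReal.ofReal (8*(N:ℝ)^2)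
        + ENNReal.ofReal (8*r^2*((N:ℝ)-1)^2) * ENNReal.ofReal ((‖x‖^2)⁻¹)) with hG
  have hae : ∀ᵐ x : EuclideanSpace ℝ (Fin N) ∂volume,
      ENNReal.ofReal ((lap v x) ^ 2) ≤ G x := by
    have hs : volume (sphere (0 : EuclideanSpace ℝ (Fin N)) r ∪ {0}) = 0 := by
      refine le_antisymm (le_trans (measure_union_le _ _) ?_) (zero_le)
      rw [Measure.addHaar_sphere, measure_singleton, add_zero]
    filter_upwards [compl_mem_ae_iff.mpr hs] with x hx
    simp only [mem_compl_iff, mem_union, not_or, mem_sphere_zero_iff_norm, mem_singleton_iff] at hx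
    obtain ⟨hxs, hx0⟩ := hx
    rcases lt_or_gt_of_ne hxs with hlt | hgt
    · -- inside
      have hn : (0:ℝ) < ‖x‖ := norm_pos_iff.mpr hx0
      rw [lap_eq r x hx0 hlt, hG,
        indicator_of_mem (mem_closedBall_zero_iff.mpr hlt.le)]
      rw [← ENNReal.ofReal_mul (by positivity), ← ENNReal.ofReal_add (by positivity)
        (by positivity)]
      apply ENNReal.ofReal_le_ofReal
      have key : ∀ A B : ℝ, (A - B)^2 ≤ 2*A^2 + 2*B^2 := by
        intro A B; nlinarith [sq_nonneg (A + B)]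
      have h1 : (2*(N:ℝ) - 2*r*((N:ℝ)-1)/‖x‖)^2
          ≤ 2*(2*(N:ℝ))^2 + 2*(2*r*((N:ℝ)-1)/‖x‖)^2 := key _ _
      have h2 : (2*r*((N:ℝ)-1)/‖x‖)^2 = (4*r^2*((N:ℝ)-1)^2) * (‖x‖^2)⁻¹ := by
        rw [div_pow, div_eq_mul_inv]; ring
      calc (2*(N:ℝ) - 2*r*((N:ℝ)-1)/‖x‖)^2
          ≤ 2*(2*(N:ℝ))^2 + 2*((4*r^2*((N:ℝ)-1)^2) * (‖x‖^2)⁻¹) := by rw [← h2]; exact h1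
        _ = 8*(N:ℝ)^2 + 8*r^2*((N:ℝ)-1)^2 * (‖x‖^2)⁻¹ := by ring
    · rw [lap_zero r x hgt]
      simp
  calc ∫⁻ x in Ω, ENNReal.ofReal ((lap v x) ^ 2)
      ≤ ∫⁻ x in Ω, G x := lintegral_mono_ae (ae_restrict_of_ae hae)
    _ ≤ ∫⁻ x, G x := setLIntegral_le_lintegral _ _
    _ = ∫⁻ x in closedBall (0 : EuclideanSpace ℝ (Fin N)) r,
          (ENNReal.ofReal (8*(N:ℝ)^2)
            + ENNReal.ofReal (8*r^2*((N:ℝ)-1)^2) * ENNReal.ofReal ((‖x‖^2)⁻¹)) := by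
        rw [hG, lintegral_indicator measurableSet_closedBall]
    _ = ENNReal.ofReal (8*(N:ℝ)^2) * volume (closedBall (0 : EuclideanSpace ℝ (Fin N)) r)
        + ENNReal.ofReal (8*r^2*((N:ℝ)-1)^2)
          * ∫⁻ x in closedBall (0 : EuclideanSpace ℝ (Fin N)) r, ENNReal.ofReal ((‖x‖^2)⁻¹) := by
        rw [lintegral_add_left measurable_const, setLIntegral_const,
          lintegral_const_mul _ (by measurability), mul_comm (ENNReal.ofReal (8*(N:ℝ)^2))]
    _ ≤ ENNReal.ofReal (8*(N:ℝ)^2) * (ENNReal.ofReal (r ^ N) * K1)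
        + ENNReal.ofReal (8*r^2*((N:ℝ)-1)^2)
          * (2 * ENNReal.ofReal (r ^ (N-2)) * K1) := by
        gcongr
        · rw [Measure.addHaar_closedBall _ _ hr.le, hfr]
        · exact J_bound hN hr
    _ = ENNReal.ofReal (r ^ N) * (ENNReal.ofReal (8*(N:ℝ)^2 + 16*((N:ℝ)-1)^2) * K1) := by
        have h2r : r^2 * r^(N-2) = r^N := by
          rw [← pow_add]; congr 1; omega
        rw [show (2 : ℝ≥0∞) = ENNReal.ofReal 2 by simp]
        rw [show ENNReal.ofReal 2 * ENNReal.ofReal (r ^ (N-2))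
            = ENNReal.ofReal (2 * r ^ (N-2)) from
          (ENNReal.ofReal_mul (by positivity)).symm]
        rw [← mul_assoc, ← mul_assoc, ← mul_assoc,
          ← ENNReal.ofReal_mul (by positivity), ← ENNReal.ofReal_mul (by positivity),
          ← ENNReal.ofReal_mul (by positivity), ← add_mul,
          ← ENNReal.ofReal_add (by positivity) (by positivity)]
        congr 2
        nlinarith [h2r]

end Helpers

set_option maxHeartbeats 1000000 in
open Metric in
/-- Let `N ≥ 5`, `R ∈ (0,∞]`, `Ω = B(0,R)` and `g : Ω → [0,∞)` radial
and radially decreasing.  If the Hardy–Rellich inequality `∫ g u_r² ≤ C ∫ |Δu_r|²` holds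
for the test functions `u_r(x) = (r-|x|)² 1_{|x|≤r}`, `r ∈ (0,R)`, then
`sup_{0<t<|Ω|} t^(4/N) g**(t) < ∞`, i.e. `g ∈ L^{N/4,∞}(Ω)`. -/
theorem necessary_weak_lorentz (N : ℕ) (hN : 5 ≤ N) (R : ℝ≥0∞) (hR : 0 < R)
    (g : EuclideanSpace ℝ (Fin N) → ℝ) (hgm : Measurable g)
    (g₀ : ℝ → ℝ) (hrad : ∀ x, g x = g₀ ‖x‖) (hdec : AntitoneOn g₀ (Ici (0 : ℝ)))
    (hg0 : ∀ x, ENNReal.ofReal ‖x‖ < R → 0 ≤ g x)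
    (C : ℝ) (hC : 0 < C)
    (hineq : ∀ r : ℝ, 0 < r → ENNReal.ofReal r < R →
      ∫⁻ x in {x : EuclideanSpace ℝ (Fin N) | ENNReal.ofReal ‖x‖ < R},
          ENNReal.ofReal (g x * ((if ‖x‖ ≤ r then (r - ‖x‖) ^ 2 else 0)) ^ 2)
        ≤ ENNReal.ofReal C *
          ∫⁻ x in {x : EuclideanSpace ℝ (Fin N) | ENNReal.ofReal ‖x‖ < R},
            ENNReal.ofReal
              ((lap (fun y => if ‖y‖ ≤ r then (r - ‖y‖) ^ 2 else 0) x) ^ 2)) :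
    ∃ M : ℝ, ∀ t : ℝ, 0 < t →
      ENNReal.ofReal t < volume {x : EuclideanSpace ℝ (Fin N) | ENNReal.ofReal ‖x‖ < R} →
      t ^ (4 / (N : ℝ)) *
          ((1 / t) * ∫ s in Ioc (0 : ℝ) t,
            decRearr
              (volume.restrict {x : EuclideanSpace ℝ (Fin N) | ENNReal.ofReal ‖x‖ < R})
              g s)
        ≤ M := by
  classical
  haveI : Nonempty (Fin N) := ⟨⟨0, by omega⟩⟩
  set Ω := {x : EuclideanSpace ℝ (Fin N) | ENNReal.ofReal ‖x‖ < R} with hΩ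
  have hΩmeas : MeasurableSet Ω := by
    have : Ω = (fun x : EuclideanSpace ℝ (Fin N) => ‖x‖) ⁻¹'
        {y : ℝ | ENNReal.ofReal y < R} := rfl
    rw [this]
    exact measurable_norm (measurableSet_lt (by measurability) measurable_const)
  set K1 := volume (ball (0 : EuclideanSpace ℝ (Fin N)) 1) with hK1
  have hK1pos : 0 < K1 := measure_ball_pos _ _ one_pos
  have hK1fin : K1 ≠ ⊤ := measure_ball_lt_top.ne
  set ω : ℝ := K1.toReal with hω
  have hωpos : 0 < ω := ENNReal.toReal_pos hK1pos.ne' hK1fin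
  have hfr : Module.finrank ℝ (EuclideanSpace ℝ (Fin N)) = N := finrank_euclideanSpace_fin
  have hNR : (5:ℝ) ≤ (N:ℝ) := by exact_mod_cast hN
  set S : ℝ := 8*(N:ℝ)^2 + 16*((N:ℝ)-1)^2 with hS
  have hSpos : 0 < S := by nlinarith
  set K₀ : ℝ := C * 2^N * S with hK₀
  have hK₀pos : 0 < K₀ := by positivity
  -- nonnegativity of g₀ on relevant radii
  have hg₀nn : ∀ ρ : ℝ, 0 < ρ → ENNReal.ofReal ρ < R → 0 ≤ g₀ ρ := by
    intro ρ hρ hρR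
    have hnorm : ‖EuclideanSpace.single (⟨0, by omega⟩ : Fin N) ρ‖ = ρ := by
      rw [EuclideanSpace.norm_single, Real.norm_eq_abs, abs_of_pos hρ]
    have hx := hg0 (EuclideanSpace.single (⟨0, by omega⟩ : Fin N) ρ) (by rw [hnorm]; exact hρR)
    rwa [hrad, hnorm] at hx
  -- Stage A
  have hA : ∀ r : ℝ, 0 < r → ENNReal.ofReal r < R → g₀ (r/2) * (r/2)^4 ≤ K₀ := by
    intro r hr hrR
    have hineq' := hineq r hr hrR
    have hball : ball (0 : EuclideanSpace ℝ (Fin N)) (r/2) ⊆ Ω := by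
      intro x hx
      rw [mem_ball_zero_iff] at hx
      exact lt_of_le_of_lt (ENNReal.ofReal_le_ofReal (by linarith)) hrR
    have hg₀r : 0 ≤ g₀ (r/2) := hg₀nn (r/2) (by linarith)
      (lt_of_le_of_lt (ENNReal.ofReal_le_ofReal (by linarith)) hrR)
    have hlow : ENNReal.ofReal (g₀ (r/2) * (r/2)^4) * (ENNReal.ofReal ((r/2)^N) * K1)
        ≤ ∫⁻ x in Ω, ENNReal.ofReal (g x * ((if ‖x‖ ≤ r then (r - ‖x‖) ^ 2 else 0)) ^ 2) := by
      calc ENNReal.ofReal (g₀ (r/2) * (r/2)^4) * (ENNReal.ofReal ((r/2)^N) * K1)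
          = ENNReal.ofReal (g₀ (r/2) * (r/2)^4)
              * volume (ball (0 : EuclideanSpace ℝ (Fin N)) (r/2)) := by
            rw [Measure.addHaar_ball _ _ (by linarith : (0:ℝ) ≤ r/2), hfr]
        _ = ∫⁻ _x in ball (0 : EuclideanSpace ℝ (Fin N)) (r/2),
              ENNReal.ofReal (g₀ (r/2) * (r/2)^4) := by
            rw [setLIntegral_const]
        _ ≤ ∫⁻ x in ball (0 : EuclideanSpace ℝ (Fin N)) (r/2),
              ENNReal.ofReal (g x * ((if ‖x‖ ≤ r then (r - ‖x‖) ^ 2 else 0)) ^ 2) := by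
            refine setLIntegral_mono' measurableSet_ball fun x hx => ?_
            rw [mem_ball_zero_iff] at hx
            apply ENNReal.ofReal_le_ofReal
            rw [if_pos (by linarith : ‖x‖ ≤ r)]
            have hgx : g₀ (r/2) ≤ g x := by
              rw [hrad]
              exact hdec (mem_Ici.mpr (norm_nonneg x)) (mem_Ici.mpr (by linarith)) hx.le
            have hpow : (r/2)^4 ≤ ((r - ‖x‖)^2)^2 := by
              rw [show ((r - ‖x‖)^2)^2 = (r - ‖x‖)^4 by ring]
              exact pow_le_pow_left₀ (by linarith) (by linarith [norm_nonneg x]) 4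
            exact mul_le_mul hgx hpow (by positivity)
              (le_trans hg₀r hgx)
        _ ≤ ∫⁻ x in Ω,
              ENNReal.ofReal (g x * ((if ‖x‖ ≤ r then (r - ‖x‖) ^ 2 else 0)) ^ 2) :=
            lintegral_mono_set hball
    have hup : ENNReal.ofReal C *
        (∫⁻ x in Ω, ENNReal.ofReal
          ((lap (fun y => if ‖y‖ ≤ r then (r - ‖y‖) ^ 2 else 0) x) ^ 2))
        ≤ ENNReal.ofReal C * (ENNReal.ofReal (r ^ N) * (ENNReal.ofReal S * K1)) := by
      gcongr
      exact rhs_bound hN hr Ω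
    have hcomb := le_trans (le_trans hlow hineq') hup
    have hcomb2 : ENNReal.ofReal (g₀ (r/2) * (r/2)^4 * (r/2)^N) * K1
        ≤ ENNReal.ofReal (C * (r^N * S)) * K1 := by
      calc ENNReal.ofReal (g₀ (r/2) * (r/2)^4 * (r/2)^N) * K1
          = ENNReal.ofReal (g₀ (r/2) * (r/2)^4) * (ENNReal.ofReal ((r/2)^N) * K1) := by
            rw [ENNReal.ofReal_mul (by positivity), mul_assoc]
        _ ≤ ENNReal.ofReal C * (ENNReal.ofReal (r ^ N) * (ENNReal.ofReal S * K1)) := hcomb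
        _ = ENNReal.ofReal (C * (r^N * S)) * K1 := by
            rw [ENNReal.ofReal_mul hC.le, ENNReal.ofReal_mul (by positivity), mul_assoc,
              mul_assoc]
    have hreal : g₀ (r/2) * (r/2)^4 * (r/2)^N ≤ C * (r^N * S) := by
      have := (ENNReal.mul_le_mul_iff_left hK1pos.ne' hK1fin).mp hcomb2
      exact (ENNReal.ofReal_le_ofReal_iff (by positivity)).mp this
    have hrN : (0:ℝ) < r^N := pow_pos hr N
    have h2N : (0:ℝ) < 2^N := by positivity
    have hexp : g₀ (r/2) * (r/2)^4 * r^N ≤ C * 2^N * S * r^N := by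
      have h1 : ((r:ℝ)/2)^N = r^N / 2^N := div_pow r 2 N
      calc g₀ (r/2) * (r/2)^4 * r^N
          = (g₀ (r/2) * (r/2)^4 * (r/2)^N) * 2^N := by rw [h1]; field_simp
        _ ≤ (C * (r^N * S)) * 2^N := by
            apply mul_le_mul_of_nonneg_right hreal (by positivity)
        _ = C * 2^N * S * r^N := by ring
    exact le_of_mul_le_mul_right hexp hrN
  -- Stage B
  have hB : ∀ ρ : ℝ, 0 < ρ → ENNReal.ofReal ρ < R → g₀ ρ * ρ^4 ≤ 256 * K₀ := by
    intro ρ hρ hρR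
    by_cases hcase : ENNReal.ofReal (2*ρ) < R
    · have h := hA (2*ρ) (by linarith) hcase
      rw [show (2*ρ)/2 = ρ by ring] at h
      nlinarith [hK₀pos]
    · push_neg at hcase
      have hRfin : R ≠ ⊤ := by
        intro htop
        rw [htop] at hcase
        exact ENNReal.ofReal_ne_top (top_le_iff.mp hcase)
      have hRt : 0 < R.toReal := ENNReal.toReal_pos hR.ne' hRfin
      set ρ' : ℝ := R.toReal/4 with hρ'def
      have hρ'pos : 0 < ρ' := by positivity
      have h2ρ' : ENNReal.ofReal (2*ρ') < R := by
        rw [show 2*ρ' = R.toReal/2 by rw [hρ'def]; ring]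
        calc ENNReal.ofReal (R.toReal/2) < ENNReal.ofReal R.toReal :=
              (ENNReal.ofReal_lt_ofReal_iff hRt).mpr (by linarith)
          _ = R := ENNReal.ofReal_toReal hRfin
      have hAρ' := hA (2*ρ') (by linarith) h2ρ'
      rw [show (2*ρ')/2 = ρ' by ring] at hAρ'
      have hRle : R.toReal ≤ 2*ρ := by
        have h1 := ENNReal.toReal_mono ENNReal.ofReal_ne_top hcase
        rwa [ENNReal.toReal_ofReal (by linarith)] at h1
      have hρρ' : ρ' ≤ ρ := by rw [hρ'def]; linarith
      have hρlt : ρ < R.toReal := by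
        rw [← ENNReal.ofReal_toReal hRfin] at hρR
        exact (ENNReal.ofReal_lt_ofReal_iff_of_nonneg hρ.le).mp hρR
      have hmono : g₀ ρ ≤ g₀ ρ' := hdec (mem_Ici.mpr hρ'pos.le) (mem_Ici.mpr hρ.le) hρρ'
      have hg₀ρ' : 0 ≤ g₀ ρ' := hg₀nn ρ' hρ'pos
        (lt_of_le_of_lt (ENNReal.ofReal_le_ofReal (by linarith)) h2ρ')
      have h4 : ρ^4 ≤ (4*ρ')^4 := pow_le_pow_left₀ hρ.le (by rw [hρ'def]; linarith) 4
      calc g₀ ρ * ρ^4 ≤ g₀ ρ' * ρ^4 := mul_le_mul_of_nonneg_right hmono (by positivity)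
        _ ≤ g₀ ρ' * (4*ρ')^4 := mul_le_mul_of_nonneg_left h4 hg₀ρ'
        _ = 256 * (g₀ ρ' * ρ'^4) := by ring
        _ ≤ 256 * K₀ := by linarith [hAρ']
  set K₃ : ℝ := 256 * K₀ with hK₃def
  have hK₃pos : 0 < K₃ := by positivity
  -- pointwise bound for g on Ω
  have hgb : ∀ x, x ∈ Ω → x ≠ 0 → g x ≤ K₃ / ‖x‖^4 := by
    intro x hxΩ hx0
    have hn : 0 < ‖x‖ := norm_pos_iff.mpr hx0
    have := hB ‖x‖ hn hxΩ
    rw [hrad]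
    rw [le_div_iff₀ (by positivity)]
    linarith
  -- decreasing rearrangement bound
  set A : ℝ := K₃ * (2*ω) ^ ((4:ℝ)/N) with hAdef
  have hApos : 0 < A := mul_pos hK₃pos (Real.rpow_pos_of_pos (by positivity) _)
  have hdr : ∀ s : ℝ, 0 < s →
      decRearr (volume.restrict Ω) g s ≤ A * s ^ (-(4/(N:ℝ))) := by
    intro s hs
    set ρ : ℝ := (s/(2*ω)) ^ ((1:ℝ)/N) with hρdef
    have hρpos : 0 < ρ := Real.rpow_pos_of_pos (by positivity) _
    have hNne : (N:ℝ) ≠ 0 := by positivity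
    have hρN : ρ ^ N = s / (2*ω) := by
      rw [hρdef, ← Real.rpow_natCast ((s/(2*ω)) ^ ((1:ℝ)/N)) N,
        ← Real.rpow_mul (by positivity)]
      rw [one_div, inv_mul_cancel₀ hNne, Real.rpow_one]
    set a : ℝ := K₃ / ρ^4 with hadef
    have hapos : 0 < a := by positivity
    have hset : (volume.restrict Ω) {x | a < |g x|} < ENNReal.ofReal s := by
      have hsub : {x : EuclideanSpace ℝ (Fin N) | a < |g x|} ∩ Ω
          ⊆ closedBall 0 ρ := by
        rintro x ⟨hx1, hx2⟩
        simp only [mem_setOf_eq] at hx1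
        rw [mem_closedBall_zero_iff]
        by_cases hx0 : x = 0
        · rw [hx0]; simp [hρpos.le]
        · have hgx := hgb x hx2 hx0
          rw [abs_of_nonneg (hg0 x hx2)] at hx1
          have hn : 0 < ‖x‖ := norm_pos_iff.mpr hx0
          have hlt : K₃/ρ^4 < K₃/‖x‖^4 := lt_of_lt_of_le hx1 hgx
          rw [div_lt_div_iff₀ (by positivity) (by positivity)] at hlt
          have h4 : ‖x‖^4 < ρ^4 := by nlinarith
          exact le_of_lt ((pow_lt_pow_iff_left₀ (norm_nonneg x) hρpos.le
            (by norm_num)).mp h4)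
      calc (volume.restrict Ω) {x | a < |g x|}
          = volume ({x : EuclideanSpace ℝ (Fin N) | a < |g x|} ∩ Ω) :=
            Measure.restrict_apply' hΩmeas
        _ ≤ volume (closedBall (0 : EuclideanSpace ℝ (Fin N)) ρ) := measure_mono hsub
        _ = ENNReal.ofReal (ρ^N) * K1 := by
            rw [Measure.addHaar_closedBall _ _ hρpos.le, hfr]
        _ = ENNReal.ofReal (ρ^N * ω) := by
            rw [ENNReal.ofReal_mul (by positivity)]
            congr 1
            exact (ENNReal.ofReal_toReal hK1fin).symm
        _ = ENNReal.ofReal (s/2) := by rw [hρN]; congr 1; field_simp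
        _ < ENNReal.ofReal s := (ENNReal.ofReal_lt_ofReal_iff hs).mpr (by linarith)
    have hle : decRearr (volume.restrict Ω) g s ≤ a :=
      csInf_le ⟨0, fun b hb => hb.1.le⟩ ⟨hapos, hset⟩
    have haval : a = A * s ^ (-(4/(N:ℝ))) := by
      have h1 : ρ^(4:ℕ) = (s/(2*ω)) ^ ((4:ℝ)/N) := by
        rw [hρdef, ← Real.rpow_natCast ((s/(2*ω)) ^ ((1:ℝ)/N)) 4,
          ← Real.rpow_mul (by positivity)]
        congr 1
        push_cast
        ring
      rw [hadef, h1, Real.div_rpow hs.le (by positivity), hAdef]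
      rw [Real.rpow_neg hs.le]
      rw [div_div_eq_mul_div, div_eq_mul_inv]
    rw [haval] at hle
    exact hle
  -- final assembly
  refine ⟨A / (1 - 4/(N:ℝ)), ?_⟩
  intro t ht htΩ
  have hc4pos : 0 < 4/(N:ℝ) := by positivity
  have hc4lt : 4/(N:ℝ) < 1 := by rw [div_lt_one (by positivity)]; linarith
  have hMpos : 0 < A / (1 - 4/(N:ℝ)) := div_pos hApos (by linarith)
  by_cases hint : IntegrableOn (fun s => decRearr (volume.restrict Ω) g s) (Ioc 0 t) volume
  · have hint2 : IntegrableOn (fun s : ℝ => A * s ^ (-(4/(N:ℝ)))) (Ioc 0 t) volume := by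
      have h := intervalIntegral.intervalIntegrable_rpow'
        (a := 0) (b := t) (r := -(4/(N:ℝ))) (by linarith)
      rw [intervalIntegrable_iff_integrableOn_Ioc_of_le ht.le] at h
      exact h.const_mul A
    have hmono : ∫ s in Ioc (0:ℝ) t, decRearr (volume.restrict Ω) g s
        ≤ ∫ s in Ioc (0:ℝ) t, A * s ^ (-(4/(N:ℝ))) :=
      setIntegral_mono_on hint hint2 measurableSet_Ioc (fun s hs => hdr s hs.1)
    have hval : ∫ s in Ioc (0:ℝ) t, A * s ^ (-(4/(N:ℝ)))
        = A * (t ^ (1 - 4/(N:ℝ)) / (1 - 4/(N:ℝ))) := by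
      rw [MeasureTheory.integral_const_mul]
      congr 1
      rw [← intervalIntegral.integral_of_le ht.le,
        integral_rpow (Or.inl (by linarith : (-1:ℝ) < -(4/(N:ℝ))))]
      rw [Real.zero_rpow (by linarith : -(4/(N:ℝ)) + 1 ≠ 0)]
      rw [show -(4/(N:ℝ)) + 1 = 1 - 4/(N:ℝ) by ring]
      ring
    have htc4 : (0:ℝ) ≤ t ^ (4/(N:ℝ)) := Real.rpow_nonneg ht.le _
    calc t ^ (4/(N:ℝ)) * ((1/t) * ∫ s in Ioc (0:ℝ) t, decRearr (volume.restrict Ω) g s)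
        ≤ t ^ (4/(N:ℝ)) * ((1/t) * (A * (t ^ (1 - 4/(N:ℝ)) / (1 - 4/(N:ℝ))))) := by
          have h0 : (0:ℝ) ≤ 1/t := by positivity
          exact mul_le_mul_of_nonneg_left
            (mul_le_mul_of_nonneg_left (hmono.trans_eq hval) h0) htc4
      _ = A / (1 - 4/(N:ℝ)) := by
          have hts : t ^ (4/(N:ℝ)) * t ^ (1 - 4/(N:ℝ)) = t := by
            rw [← Real.rpow_add ht]
            norm_num
          calc t ^ (4/(N:ℝ)) * ((1/t) * (A * (t ^ (1 - 4/(N:ℝ)) / (1 - 4/(N:ℝ)))))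
              = (A/(1 - 4/(N:ℝ))) * ((t ^ (4/(N:ℝ)) * t ^ (1 - 4/(N:ℝ)))/t) := by ring
            _ = (A/(1 - 4/(N:ℝ))) * (t/t) := by rw [hts]
            _ = A/(1 - 4/(N:ℝ)) := by rw [div_self ht.ne', mul_one]
  · rw [integral_undef hint]
    rw [mul_zero, mul_zero]
    exact hMpos.le
end

section
/- Let Ω ⊂ ℝ^N be bounded and measurable with |Ω| < ∞, and let f : Ω → ℝ be measurable with decreasing rearrangement f*. Then sup_{0<t<|Ω|} t log(|Ω|/t) f**(t) ≤ sup_{0<t<|Ω|} t [log(|Ω|/t)]² f*(t), where f**(t) = (1/t)∫₀^t f*(s) ds. -/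
open MeasureTheory Set
open scoped ENNReal

/-- For `Ω ⊂ ℝ^N` bounded measurable and `f : Ω → ℝ` measurable,
`sup_{0<t<|Ω|} t log(|Ω|/t) f**(t) ≤ sup_{0<t<|Ω|} t (log(|Ω|/t))² f*(t)`
(formulated as: every upper bound of the right-hand family bounds the left-hand family). -/
theorem MlogL_le_LorentzZygmund (N : ℕ) (hN : 1 ≤ N)
    (Ω : Set (EuclideanSpace ℝ (Fin N))) (hΩ : MeasurableSet Ω)
    (hb : Bornology.IsBounded Ω)
    (f : EuclideanSpace ℝ (Fin N) → ℝ) (hf : Measurable f) (M : ℝ)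
    (hM : ∀ t : ℝ, 0 < t → t < (volume Ω).toReal →
      t * Real.log ((volume Ω).toReal / t) ^ 2 * decRearr (volume.restrict Ω) f t ≤ M) :
    ∀ t : ℝ, 0 < t → t < (volume Ω).toReal →
      t * Real.log ((volume Ω).toReal / t) *
          ((1 / t) * ∫ s in Ioc (0 : ℝ) t, decRearr (volume.restrict Ω) f s) ≤ M := by
  intro t ht htV
  set V : ℝ := (volume Ω).toReal with hVdef
  set g : ℝ → ℝ := decRearr (volume.restrict Ω) f with hgdef
  have hV0 : 0 < V := ht.trans htV
  have hgnn : ∀ s, 0 ≤ g s := by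
    intro s
    apply Real.sInf_nonneg
    rintro x ⟨hx, -⟩
    exact hx.le
  have hL : 0 < Real.log (V / t) := Real.log_pos (by rw [lt_div_iff₀ ht]; linarith)
  have hM0 : 0 ≤ M :=
    le_trans (mul_nonneg (mul_nonneg ht.le (sq_nonneg _)) (hgnn t)) (hM t ht htV)
  -- pointwise bound on g
  have hpt : ∀ s, 0 < s → s ≤ t → g s ≤ M / (s * (Real.log V - Real.log s) ^ 2) := by
    intro s hs hst
    have hsV : s < V := lt_of_le_of_lt hst htV
    have hLs : 0 < Real.log V - Real.log s := sub_pos.mpr (Real.log_lt_log hs hsV)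
    have h1 := hM s hs hsV
    rw [Real.log_div (ne_of_gt hV0) (ne_of_gt hs)] at h1
    rw [le_div_iff₀ (by positivity)]
    nlinarith [h1]
  by_cases hIg : IntegrableOn g (Ioc 0 t) volume
  · -- truncated bound
    have key : ∀ ε : ℝ, 0 < ε → ε ≤ t → ∫ s in Ioc ε t, g s ≤ M / Real.log (V / t) := by
      intro ε hε hεt
      set h : ℝ → ℝ := fun s => M / (s * (Real.log V - Real.log s) ^ 2) with hhdef
      have hne : ∀ s ∈ Icc ε t, s * (Real.log V - Real.log s) ^ 2 ≠ 0 := by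
        intro s hs
        have hs0 : 0 < s := lt_of_lt_of_le hε hs.1
        have hLs : 0 < Real.log V - Real.log s :=
          sub_pos.mpr (Real.log_lt_log hs0 (lt_of_le_of_lt hs.2 htV))
        positivity
      have hcont : ContinuousOn h (Icc ε t) := by
        apply ContinuousOn.div continuousOn_const _ hne
        apply ContinuousOn.mul continuousOn_id
        apply ContinuousOn.pow
        apply ContinuousOn.sub continuousOn_const
        apply Real.continuousOn_log.mono
        intro s hs
        exact ne_of_gt (lt_of_lt_of_le hε hs.1)
      have hInt_h : IntervalIntegrable h volume ε t :=
        hcont.intervalIntegrable_of_Icc hεt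
      have hF : ∀ s ∈ uIcc ε t,
          HasDerivAt (fun x => M / (Real.log V - Real.log x)) (h s) s := by
        intro s hs
        rw [uIcc_of_le hεt] at hs
        have hs0 : 0 < s := lt_of_lt_of_le hε hs.1
        have hLs : 0 < Real.log V - Real.log s :=
          sub_pos.mpr (Real.log_lt_log hs0 (lt_of_le_of_lt hs.2 htV))
        have hu : HasDerivAt (fun x => Real.log V - Real.log x) (-(1 / s)) s := by
          simpa using (Real.hasDerivAt_log (ne_of_gt hs0)).const_sub (Real.log V)
        have h2 := (hu.inv (ne_of_gt hLs)).const_mul M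
        have heq : M * (-(-(1 / s)) / (Real.log V - Real.log s) ^ 2) = h s := by
          rw [hhdef]; field_simp
        rw [heq] at h2
        convert h2 using 2 with x
        all_goals rfl
      have hFTC : ∫ s in ε..t, h s
          = M / (Real.log V - Real.log t) - M / (Real.log V - Real.log ε) :=
        intervalIntegral.integral_eq_sub_of_hasDerivAt hF hInt_h
      have hLε : 0 < Real.log V - Real.log ε :=
        sub_pos.mpr (Real.log_lt_log hε (lt_of_le_of_lt hεt htV))
      have hbound : ∫ s in Ioc ε t, h s ≤ M / Real.log (V / t) := by
        rw [← intervalIntegral.integral_of_le hεt, hFTC,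
          Real.log_div (ne_of_gt hV0) (ne_of_gt ht)]
        have : 0 ≤ M / (Real.log V - Real.log ε) := div_nonneg hM0 hLε.le
        linarith
      refine le_trans ?_ hbound
      apply setIntegral_mono_on
      · exact hIg.mono_set (Ioc_subset_Ioc_left hε.le)
      · exact hInt_h.1
      · exact measurableSet_Ioc
      · intro s hs
        exact hpt s (lt_of_lt_of_le hε hs.1.le) hs.2
    -- limit argument
    have hmono : Monotone (fun n : ℕ => Ioc (t / (n + 1)) t) := by
      intro n m hnm
      apply Ioc_subset_Ioc_left
      gcongr
    have hunion : ⋃ n : ℕ, Ioc (t / (n + 1)) t = Ioc 0 t := by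
      ext x
      simp only [mem_iUnion, mem_Ioc]
      constructor
      · rintro ⟨n, h1, h2⟩
        have : (0 : ℝ) < t / (n + 1) := by positivity
        exact ⟨this.trans h1, h2⟩
      · rintro ⟨hx0, hxt⟩
        obtain ⟨n, hn⟩ := exists_nat_gt (t / x)
        refine ⟨n, ?_, hxt⟩
        rw [div_lt_iff₀ (by positivity)]
        rw [div_lt_iff₀ hx0] at hn
        nlinarith [hn]
    have hseq : Filter.Tendsto (fun n : ℕ => ∫ s in Ioc (t / (n + 1)) t, g s)
        Filter.atTop (nhds (∫ s in Ioc 0 t, g s)) := by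
      have h0 : IntegrableOn g (⋃ n : ℕ, Ioc (t / (n + 1)) t) volume := by
        rw [hunion]; exact hIg
      have := MeasureTheory.tendsto_setIntegral_of_monotone
        (fun n : ℕ => measurableSet_Ioc) hmono h0
      rwa [hunion] at this
    have hlim : ∫ s in Ioc 0 t, g s ≤ M / Real.log (V / t) := by
      apply le_of_tendsto' hseq
      intro n
      apply key
      · positivity
      · apply div_le_self ht.le
        have : (0 : ℝ) ≤ n := Nat.cast_nonneg n
        linarith
    calc t * Real.log (V / t) * (1 / t * ∫ s in Ioc 0 t, g s)
        = Real.log (V / t) * ∫ s in Ioc 0 t, g s := by field_simp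
      _ ≤ Real.log (V / t) * (M / Real.log (V / t)) :=
          mul_le_mul_of_nonneg_left hlim hL.le
      _ = M := by field_simp
  · rw [MeasureTheory.integral_undef hIg, mul_zero, mul_zero]
    exact hM0
end
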